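/- arXiv:1811.12810 — 4 statements merged into one kernel-verified Lean document; each statement's English description precedes it below -/
import Mathlib

section
/- Let Q_{a,b} = (0,a) × (0,b) ⊂ ℝ² with 0 < b ≤ a. Then the unique r* ∈ (0, b/2) solving 2(a + b − 4r)/((a − 2r)(b − 2r)) = 1/r equals (a + b − √(a² + b² − ab))/6. In particular, for the square Q_a = (0,a)², r* = a/6 and Λ_∞(Q_a) = 27/(2a³). -/
open Set

/-- For the rectangle `Q_{a,b} = (0,a) × (0,b)` with `0 < b ≤ a`, the inner parallel set at
distance `r ∈ (0, b/2)` has area `(a-2r)(b-2r)` and perimeter `2(a+b-4r)`; the unique root in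
`(0, b/2)` of `2(a+b-4r)/((a-2r)(b-2r)) = 1/r` is `(a+b-√(a²+b²-ab))/6`; for the square
(`b = a`) it is `a/6`, and `Λ_∞(Q_a) = 1/(r*·(a-2r*)²) = 27/(2a³)`. -/
theorem stmt_5 (a b : ℝ) (hb : 0 < b) (hba : b ≤ a) :
    ((a + b - Real.sqrt (a ^ 2 + b ^ 2 - a * b)) / 6) ∈ Set.Ioo 0 (b / 2) ∧
    2 * (a + b - 4 * ((a + b - Real.sqrt (a ^ 2 + b ^ 2 - a * b)) / 6))
        / ((a - 2 * ((a + b - Real.sqrt (a ^ 2 + b ^ 2 - a * b)) / 6))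
          * (b - 2 * ((a + b - Real.sqrt (a ^ 2 + b ^ 2 - a * b)) / 6)))
      = 1 / ((a + b - Real.sqrt (a ^ 2 + b ^ 2 - a * b)) / 6) ∧
    (∀ r ∈ Set.Ioo 0 (b / 2),
      2 * (a + b - 4 * r) / ((a - 2 * r) * (b - 2 * r)) = 1 / r →
        r = (a + b - Real.sqrt (a ^ 2 + b ^ 2 - a * b)) / 6) ∧
    (b = a →
      (a + b - Real.sqrt (a ^ 2 + b ^ 2 - a * b)) / 6 = a / 6 ∧
      1 / ((a / 6) * ((a - 2 * (a / 6)) * (a - 2 * (a / 6)))) = 27 / (2 * a ^ 3)) := by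
  have ha : 0 < a := lt_of_lt_of_le hb hba
  set s := Real.sqrt (a ^ 2 + b ^ 2 - a * b) with hs
  have hnn : 0 ≤ a ^ 2 + b ^ 2 - a * b := by nlinarith
  have hs2 : s ^ 2 = a ^ 2 + b ^ 2 - a * b := Real.sq_sqrt hnn
  have hs0 : 0 ≤ s := Real.sqrt_nonneg _
  have hslt : s < a + b := by nlinarith
  have hsgt : a - 2 * b < s := by nlinarith
  have h3b : 3 * b ≤ a + b + s := by nlinarith
  have hmem : (a + b - s) / 6 ∈ Set.Ioo 0 (b / 2) := by
    constructor <;> [linarith; linarith]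
  have hr0 : 0 < (a + b - s) / 6 := hmem.1
  have hrb : (a + b - s) / 6 < b / 2 := hmem.2
  have hda : a - 2 * ((a + b - s) / 6) > 0 := by
    have : (a + b - s) / 6 < a / 2 := lt_of_lt_of_le hrb (by linarith)
    linarith
  have hdb : b - 2 * ((a + b - s) / 6) > 0 := by linarith
  refine ⟨hmem, ?_, ?_, ?_⟩
  · rw [div_eq_div_iff (by positivity) (by positivity)]
    nlinarith [hs2]
  · rintro r ⟨hr1, hr2⟩ heq
    have hda' : a - 2 * r > 0 := by linarith
    have hdb' : b - 2 * r > 0 := by linarith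
    rw [div_eq_div_iff (by positivity) (by positivity)] at heq
    have hquad : 12 * r ^ 2 - 4 * (a + b) * r + a * b = 0 := by nlinarith
    have hfac : (6 * r - (a + b - s)) * (6 * r - (a + b + s)) = 0 := by nlinarith
    have h2ne : 6 * r - (a + b + s) ≠ 0 := by
      have : 6 * r < 3 * b := by linarith
      intro h; linarith [h3b]
    have h1 : 6 * r - (a + b - s) = 0 := by
      rcases mul_eq_zero.1 hfac with h | h
      · exact h
      · exact absurd h h2ne
    linarith
  · intro hab
    subst hab
    have : s = b := by
      rw [hs]
      rw [show b ^ 2 + b ^ 2 - b * b = b ^ 2 by ring]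
      exact Real.sqrt_sq hb.le
    constructor
    · rw [this]; ring
    · have hpos : (0:ℝ) < b / 6 * ((b - 2 * (b / 6)) * (b - 2 * (b / 6))) := by
        rw [show b / 6 * ((b - 2 * (b / 6)) * (b - 2 * (b / 6))) = 2 * b ^ 3 / 27 by ring]
        positivity
      have hpos2 : (0:ℝ) < 2 * b ^ 3 := by positivity
      rw [div_eq_div_iff hpos.ne' hpos2.ne']
      ring
end

section
/- Let Ω ⊂ ℝⁿ be a nonempty open bounded set and Λ > 0. Then the functional J_Λ(u) := Lip(u) + Λ·|{x ∈ Ω : u(x) > 0}| attains its minimum over the class of nonnegative Lipschitz functions u on Ω̄ with u = 1 on ∂Ω. -/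
open MeasureTheory Metric Set Filter

noncomputable section

/-- The inner parallel set `Ω_r = {x ∈ Ω : dist(x, ∂Ω) > r}`. -/
def innerParallel {n : ℕ} (Ω : Set (EuclideanSpace ℝ (Fin n))) (r : ℝ) :
    Set (EuclideanSpace ℝ (Fin n)) :=
  {x ∈ Ω | r < infDist x (frontier Ω)}

/-- The inradius `R_Ω = sup_{x ∈ Ω} dist(x, ∂Ω)`. -/
def inradius {n : ℕ} (Ω : Set (EuclideanSpace ℝ (Fin n))) : ℝ :=
  sSup ((fun x => infDist x (frontier Ω)) '' Ω)

/-- The perimeter of a set: the `(n-1)`-dimensional Hausdorff measure of its boundary. -/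
def perim {n : ℕ} (A : Set (EuclideanSpace ℝ (Fin n))) : ℝ :=
  (μH[(n : ℝ) - 1] (frontier A)).toReal

/-- The Lipschitz constant of `u` on the set `s` (the least admissible constant). -/
def lipOn {n : ℕ} (u : EuclideanSpace ℝ (Fin n) → ℝ)
    (s : Set (EuclideanSpace ℝ (Fin n))) : ℝ :=
  sInf {L : ℝ | 0 ≤ L ∧ ∀ x ∈ s, ∀ y ∈ s, |u x - u y| ≤ L * dist x y}

/-- The admissible class `𝓛₁(Ω)`: nonnegative Lipschitz functions on `Ω̄` with `u = 1`
on `∂Ω`. -/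
def admissible {n : ℕ} (Ω : Set (EuclideanSpace ℝ (Fin n))) :
    Set (EuclideanSpace ℝ (Fin n) → ℝ) :=
  {u | (∃ L : ℝ, ∀ x ∈ closure Ω, ∀ y ∈ closure Ω, |u x - u y| ≤ L * dist x y) ∧
    (∀ x ∈ Ω, 0 ≤ u x) ∧ (∀ x ∈ frontier Ω, u x = 1)}

/-- The functional `J_Λ(u) = Lip(u) + Λ |{u > 0}|`. -/
def Jfun {n : ℕ} (Ω : Set (EuclideanSpace ℝ (Fin n))) (Λ : ℝ)
    (u : EuclideanSpace ℝ (Fin n) → ℝ) : ℝ :=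
  lipOn u (closure Ω) + Λ * (volume {x ∈ Ω | 0 < u x}).toReal

/-- The model function `v_r(x) = [1 - dist(x,∂Ω)/r]₊`. -/
def vfun {n : ℕ} (Ω : Set (EuclideanSpace ℝ (Fin n))) (r : ℝ)
    (x : EuclideanSpace ℝ (Fin n)) : ℝ :=
  max (1 - infDist x (frontier Ω) / r) 0

/-! ### Auxiliary lemmas -/

section lipfacts
variable {n : ℕ} {u : EuclideanSpace ℝ (Fin n) → ℝ} {s : Set (EuclideanSpace ℝ (Fin n))}

lemma lipSet_bddBelow : BddBelow {L : ℝ | 0 ≤ L ∧ ∀ x ∈ s, ∀ y ∈ s, |u x - u y| ≤ L * dist x y} :=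
  ⟨0, fun _ h => h.1⟩

lemma lipSet_nonempty (h : ∃ L : ℝ, ∀ x ∈ s, ∀ y ∈ s, |u x - u y| ≤ L * dist x y) :
    {L : ℝ | 0 ≤ L ∧ ∀ x ∈ s, ∀ y ∈ s, |u x - u y| ≤ L * dist x y}.Nonempty := by
  obtain ⟨L, hL⟩ := h
  exact ⟨max L 0, le_max_right _ _, fun x hx y hy =>
    (hL x hx y hy).trans (by nlinarith [dist_nonneg (x := x) (y := y), le_max_left L 0])⟩

lemma lipOn_nonneg (h : ∃ L : ℝ, ∀ x ∈ s, ∀ y ∈ s, |u x - u y| ≤ L * dist x y) :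
    0 ≤ lipOn u s :=
  le_csInf (lipSet_nonempty h) fun _ hb => hb.1

lemma lipOn_le {L : ℝ} (h0 : 0 ≤ L) (h : ∀ x ∈ s, ∀ y ∈ s, |u x - u y| ≤ L * dist x y) :
    lipOn u s ≤ L :=
  csInf_le lipSet_bddBelow ⟨h0, h⟩

lemma lipOn_spec (h : ∃ L : ℝ, ∀ x ∈ s, ∀ y ∈ s, |u x - u y| ≤ L * dist x y)
    {x y : EuclideanSpace ℝ (Fin n)} (hx : x ∈ s) (hy : y ∈ s) :
    |u x - u y| ≤ lipOn u s * dist x y := by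
  have hne := lipSet_nonempty (u := u) h
  refine le_of_forall_pos_le_add fun ε hε => ?_
  have hd : (0:ℝ) ≤ dist x y := dist_nonneg
  have hε' : 0 < ε / (dist x y + 1) := by positivity
  obtain ⟨L, hL, hLlt⟩ := exists_lt_of_csInf_lt hne
    (lt_add_of_pos_right (sInf _) hε')
  calc |u x - u y| ≤ L * dist x y := hL.2 x hx y hy
    _ ≤ (lipOn u s + ε / (dist x y + 1)) * dist x y := by
        apply mul_le_mul_of_nonneg_right hLlt.le hd
    _ = lipOn u s * dist x y + (ε / (dist x y + 1)) * dist x y := by ring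
    _ ≤ lipOn u s * dist x y + ε := by
        have : (ε / (dist x y + 1)) * dist x y ≤ ε := by
          rw [div_mul_eq_mul_div, div_le_iff₀ (by linarith)]
          nlinarith
        linarith

end lipfacts

/-- Minimum attainment for a lower-semicontinuous-like function on a compact interval. -/
lemma lsc_exists_min (a b : ℝ) (hab : a ≤ b) (F : ℝ → ℝ) (hF0 : ∀ r ∈ Icc a b, 0 ≤ F r)
    (hlsc : ∀ r ∈ Icc a b, ∀ ε > 0, ∀ᶠ s in nhdsWithin r (Icc a b), F r ≤ F s + ε) :
    ∃ r ∈ Icc a b, ∀ s ∈ Icc a b, F r ≤ F s := by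
  have hne : (F '' Icc a b).Nonempty := ⟨F a, mem_image_of_mem F ⟨le_refl a, hab⟩⟩
  have hbdd : BddBelow (F '' Icc a b) := ⟨0, fun y ⟨x, hx, hxy⟩ => hxy ▸ hF0 x hx⟩
  set I := sInf (F '' Icc a b) with hI
  have hseq : ∀ j : ℕ, ∃ r ∈ Icc a b, F r < I + 1 / (j + 1) := by
    intro j
    have : I < I + 1 / (j + 1) := by
      have : (0:ℝ) < 1 / (j + 1) := by positivity
      linarith
    obtain ⟨y, ⟨r, hr, rfl⟩, hy⟩ := exists_lt_of_csInf_lt hne this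
    exact ⟨r, hr, hy⟩
  choose r hr hFr using hseq
  obtain ⟨x, hx, φ, hφ, hconv⟩ := isCompact_Icc.tendsto_subseq hr
  refine ⟨x, hx, fun s hs => ?_⟩
  have key : F x ≤ I := by
    refine le_of_forall_pos_le_add fun ε hε => ?_
    have h1 : ∀ᶠ j in atTop, F x ≤ F (r (φ j)) + ε / 2 := by
      have hconv' : Tendsto (fun j => r (φ j)) atTop (nhdsWithin x (Icc a b)) := by
        rw [tendsto_nhdsWithin_iff]
        exact ⟨hconv, Eventually.of_forall fun j => hr (φ j)⟩
      exact hconv' (hlsc x hx (ε / 2) (by linarith))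
    have h2 : ∀ᶠ j in atTop, (1 : ℝ) / (φ j + 1) ≤ ε / 2 := by
      have h3 : Tendsto (fun j : ℕ => (1 : ℝ) / (φ j + 1)) atTop (nhds 0) :=
        (tendsto_one_div_add_atTop_nhds_zero_nat).comp hφ.tendsto_atTop
      exact h3.eventually_le_const (by linarith)
    obtain ⟨j, hj1, hj2⟩ := (h1.and h2).exists
    have := hFr (φ j)
    calc F x ≤ F (r (φ j)) + ε / 2 := hj1
      _ ≤ (I + 1 / (φ j + 1)) + ε / 2 := by linarith
      _ ≤ I + ε := by linarith
  exact key.trans (csInf_le hbdd (mem_image_of_mem F hs))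

theorem stmt_9 (n : ℕ) (hn : 2 ≤ n) (Ω : Set (EuclideanSpace ℝ (Fin n)))
    (hΩo : IsOpen Ω) (hΩb : Bornology.IsBounded Ω) (hΩne : Ω.Nonempty)
    (Λ : ℝ) (hΛ : 0 < Λ) :
    ∃ u ∈ admissible Ω, ∀ v ∈ admissible Ω, Jfun Ω Λ u ≤ Jfun Ω Λ v := by
  haveI : Nonempty (Fin n) := ⟨⟨0, by omega⟩⟩
  -- basic facts
  have hFne : (frontier Ω).Nonempty := by
    rw [nonempty_frontier_iff]
    refine ⟨hΩne, fun h => ?_⟩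
    exact NormedSpace.unbounded_univ ℝ (EuclideanSpace ℝ (Fin n)) (h ▸ hΩb)
  have hμfin : volume Ω ≠ ⊤ := hΩb.measure_lt_top.ne
  have hμpos : 0 < (volume Ω).toReal :=
    ENNReal.toReal_pos (hΩo.measure_pos volume hΩne).ne' hμfin
  set c : ℝ := Λ * (volume Ω).toReal with hc
  have hcpos : 0 < c := mul_pos hΛ hμpos
  -- the family of sublevel sets and their measures
  set A : ℝ → Set (EuclideanSpace ℝ (Fin n)) :=
    fun t => {x ∈ Ω | infDist x (frontier Ω) < t} with hA
  have hAsub : ∀ t, A t ⊆ Ω := fun t x hx => hx.1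
  have hAmono : ∀ {t t' : ℝ}, t ≤ t' → A t ⊆ A t' := fun htt' x hx => ⟨hx.1, hx.2.trans_le htt'⟩
  set m : ℝ → ℝ := fun t => (volume (A t)).toReal with hm
  have hmfin : ∀ t, volume (A t) ≠ ⊤ := fun t =>
    ((measure_mono (hAsub t)).trans_lt hΩb.measure_lt_top).ne
  have hmmono : ∀ {t t' : ℝ}, t ≤ t' → m t ≤ m t' := fun htt' =>
    ENNReal.toReal_mono (hmfin _) (measure_mono (hAmono htt'))
  have hmleΩ : ∀ t, m t ≤ (volume Ω).toReal := fun t =>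
    ENNReal.toReal_mono hμfin (measure_mono (hAsub t))
  have hm0 : ∀ t, 0 ≤ m t := fun t => ENNReal.toReal_nonneg
  -- left-continuity of m
  have hmleft : ∀ r : ℝ, ∀ ε > 0, ∃ t < r, m r ≤ m t + ε := by
    intro r ε hε
    have hmonoseq : Monotone (fun k : ℕ => A (r - 1 / (k + 1))) := by
      intro k l hkl
      apply hAmono
      have h1 : (1 : ℝ) / (l + 1) ≤ 1 / (k + 1) := by
        apply one_div_le_one_div_of_le (by positivity)
        exact_mod_cast by omega
      linarith
    have hunion : (⋃ k : ℕ, A (r - 1 / (k + 1))) = A r := by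
      apply Subset.antisymm
      · refine iUnion_subset fun k => hAmono ?_
        have h : (0:ℝ) < 1 / ((k:ℝ) + 1) := by positivity
        linarith
      · intro x hx
        obtain ⟨k, hk⟩ := exists_nat_one_div_lt (show (0:ℝ) < r - infDist x (frontier Ω) by
          linarith [hx.2])
        exact mem_iUnion.mpr ⟨k, hx.1, by push_cast at hk ⊢; linarith⟩
    have htends : Tendsto (fun k : ℕ => m (r - 1 / (k + 1))) atTop (nhds (m r)) := by
      have h1 := tendsto_measure_iUnion_atTop (μ := volume) hmonoseq
      rw [hunion] at h1
      exact (ENNReal.tendsto_toReal (hmfin r)).comp h1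
    have := htends.eventually_const_lt (show m r - ε < m r by linarith)
    obtain ⟨k, hk⟩ := this.exists
    refine ⟨r - 1 / (k + 1), ?_, by linarith⟩
    have h : (0:ℝ) < 1 / ((k:ℝ) + 1) := by positivity
    linarith
  -- positivity set of the model function
  have hApos : ∀ r : ℝ, 0 < r → {x ∈ Ω | 0 < vfun Ω r x} = A r := by
    intro r hr
    ext x
    simp only [mem_setOf_eq, hA, vfun, lt_max_iff, lt_self_iff_false, or_false]
    constructor
    · rintro ⟨hx, h2⟩
      refine ⟨hx, ?_⟩
      have : infDist x (frontier Ω) / r < 1 := by linarith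
      calc infDist x (frontier Ω) = (infDist x (frontier Ω) / r) * r := by field_simp
        _ < 1 * r := by apply mul_lt_mul_of_pos_right this hr
        _ = r := one_mul r
    · rintro ⟨hx, h2⟩
      refine ⟨hx, ?_⟩
      have : infDist x (frontier Ω) / r < 1 := (div_lt_one hr).mpr h2
      linarith
  -- the model function is admissible with Lipschitz constant 1/r
  have hvlip : ∀ r : ℝ, 0 < r → ∀ x ∈ closure Ω, ∀ y ∈ closure Ω,
      |vfun Ω r x - vfun Ω r y| ≤ (1 / r) * dist x y := by
    intro r hr x _ y _
    have h1 : |vfun Ω r x - vfun Ω r y| ≤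
        |(1 - infDist x (frontier Ω) / r) - (1 - infDist y (frontier Ω) / r)| :=
      abs_max_sub_max_le_abs _ _ _
    have h2 : |(1 - infDist x (frontier Ω) / r) - (1 - infDist y (frontier Ω) / r)| =
        |infDist y (frontier Ω) - infDist x (frontier Ω)| / r := by
      rw [show (1 - infDist x (frontier Ω) / r) - (1 - infDist y (frontier Ω) / r) =
        (infDist y (frontier Ω) - infDist x (frontier Ω)) / r from by ring, abs_div,
        abs_of_pos hr]
    have h3 : |infDist y (frontier Ω) - infDist x (frontier Ω)| ≤ dist x y := by
      rw [abs_sub_comm]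
      have := (lipschitz_infDist_pt (frontier Ω)).dist_le_mul x y
      rw [NNReal.coe_one, one_mul] at this
      calc |infDist x (frontier Ω) - infDist y (frontier Ω)|
          = dist (infDist x (frontier Ω)) (infDist y (frontier Ω)) := (Real.dist_eq _ _).symm
        _ ≤ dist x y := this
    calc |vfun Ω r x - vfun Ω r y| ≤ |infDist y (frontier Ω) - infDist x (frontier Ω)| / r :=
          h1.trans_eq h2
      _ ≤ dist x y / r := by gcongr
      _ = (1 / r) * dist x y := by ring
  have hvadm : ∀ r : ℝ, 0 < r → vfun Ω r ∈ admissible Ω := by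
    intro r hr
    refine ⟨⟨1 / r, hvlip r hr⟩, fun x _ => le_max_right _ _, fun x hx => ?_⟩
    simp [vfun, infDist_zero_of_mem hx]
  -- J on the model function
  set F : ℝ → ℝ := fun r => 1 / r + Λ * m r with hF
  have hJv : ∀ r : ℝ, 0 < r → Jfun Ω Λ (vfun Ω r) ≤ F r := by
    intro r hr
    rw [Jfun, hApos r hr]
    have h := lipOn_le (u := vfun Ω r) (s := closure Ω) (by positivity) (hvlip r hr)
    simp only [hF, hm]
    linarith
  -- lower bound for admissible functions
  have hlower : ∀ u ∈ admissible Ω, ∀ x ∈ Ω,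
      lipOn u (closure Ω) * infDist x (frontier Ω) < 1 → 0 < u x := by
    rintro u ⟨huL, hupos, hub⟩ x hxΩ hx
    set L := lipOn u (closure Ω) with hL
    have hL0 : 0 ≤ L := lipOn_nonneg huL
    rcases eq_or_lt_of_le hL0 with hL0' | hLpos
    · obtain ⟨y, hy⟩ := hFne
      have := lipOn_spec huL (subset_closure hxΩ) (frontier_subset_closure hy)
      rw [← hL, ← hL0', zero_mul] at this
      have huy := hub y hy
      have : u x = 1 := by
        have h := abs_nonpos_iff.mp this
        linarith [sub_eq_zero.mp h, huy]
      linarith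
    · set d := infDist x (frontier Ω) with hd
      set η := (1 + L * d) / 2 with hη
      have hη1 : η < 1 := by rw [hη]; linarith
      have hdη : d < η / L := by
        rw [lt_div_iff₀ hLpos]
        rw [hη]; linarith [mul_comm d L]
      obtain ⟨y, hy, hdist⟩ := (infDist_lt_iff hFne).mp hdη
      have hspec := lipOn_spec huL (subset_closure hxΩ) (frontier_subset_closure hy)
      rw [← hL] at hspec
      have huy := hub y hy
      have : |u x - 1| ≤ L * dist x y := by rwa [huy] at hspec
      have h2 : L * dist x y < η := by
        calc L * dist x y < L * (η / L) := by apply mul_lt_mul_of_pos_left hdist hLpos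
          _ = η := by field_simp
      have := abs_le.mp this
      linarith [this.1]
  have hJlow : ∀ u ∈ admissible Ω, 0 < lipOn u (closure Ω) →
      F (1 / lipOn u (closure Ω)) ≤ Jfun Ω Λ u := by
    intro u hu hLpos
    set L := lipOn u (closure Ω) with hL
    have hsub : A (1 / L) ⊆ {x ∈ Ω | 0 < u x} := by
      intro x hx
      refine ⟨hx.1, hlower u hu x hx.1 ?_⟩
      calc L * infDist x (frontier Ω) < L * (1 / L) := mul_lt_mul_of_pos_left hx.2 hLpos
        _ = 1 := by field_simp
    have hμle : m (1 / L) ≤ (volume {x ∈ Ω | 0 < u x}).toReal := by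
      apply ENNReal.toReal_mono
      · exact ((measure_mono (fun x (hx : x ∈ {x ∈ Ω | 0 < u x}) => hx.1)).trans_lt
          hΩb.measure_lt_top).ne
      · exact measure_mono hsub
    have := mul_le_mul_of_nonneg_left hμle hΛ.le
    simp only [hF, Jfun, one_div_one_div]
    linarith
  have hJzero : ∀ u ∈ admissible Ω, lipOn u (closure Ω) = 0 → Jfun Ω Λ u = c := by
    intro u hu hL0
    have hpos : {x ∈ Ω | 0 < u x} = Ω := by
      apply Subset.antisymm (fun x hx => hx.1)
      intro x hx
      exact ⟨hx, hlower u hu x hx (by rw [hL0, zero_mul]; norm_num)⟩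
    rw [Jfun, hpos, hL0, zero_add, hc]
  -- the constant function 1 is admissible with J = c
  have hone : (fun _ : EuclideanSpace ℝ (Fin n) => (1:ℝ)) ∈ admissible Ω := by
    refine ⟨⟨0, fun x _ y _ => by simp⟩, fun x _ => one_pos.le, fun x _ => rfl⟩
  have honeJ : Jfun Ω Λ (fun _ => (1:ℝ)) = c := by
    apply hJzero _ hone
    apply le_antisymm (lipOn_le le_rfl fun x _ y _ => by simp) (lipOn_nonneg hone.1)
  -- main case split
  by_cases hcase : ∃ r : ℝ, 0 < r ∧ F r < c
  · -- there is a strictly better model function; minimize F on a compact interval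
    obtain ⟨r₀, hr₀, hFr₀⟩ := hcase
    set R := diam (closure Ω) with hR
    have hAR : ∀ r : ℝ, R < r → A r = Ω := by
      intro r hRr
      apply Subset.antisymm (hAsub r)
      intro x hx
      obtain ⟨y, hy⟩ := hFne
      have h1 : infDist x (frontier Ω) ≤ dist x y := infDist_le_dist_of_mem hy
      have h2 : dist x y ≤ R := dist_le_diam_of_mem hΩb.closure (subset_closure hx)
        (frontier_subset_closure hy)
      exact ⟨hx, by linarith⟩
    set δ := 1 / c with hδ
    have hδpos : 0 < δ := by positivity
    have hFpos : ∀ r : ℝ, 0 < r → 1 / r ≤ F r := by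
      intro r hr
      have := mul_nonneg hΛ.le (hm0 r)
      rw [hF]; linarith
    have hδr₀ : δ < r₀ := by
      have h1 : 1 / r₀ < c := (hFpos r₀ hr₀).trans_lt hFr₀
      rw [hδ, div_lt_iff₀ hcpos]
      rw [div_lt_iff₀ hr₀] at h1
      nlinarith
    have hr₀R : r₀ ≤ R := by
      by_contra hcon
      push_neg at hcon
      have : F r₀ = 1 / r₀ + c := by simp only [hF, hc, hm]; rw [hAR r₀ hcon]
      have h2 : 0 < 1 / r₀ := by positivity
      rw [this] at hFr₀; linarith
    have hδR : δ ≤ R := le_of_lt (hδr₀.trans_le hr₀R)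
    -- lower semicontinuity of F on [δ, R]
    have hlsc : ∀ r ∈ Icc δ R, ∀ ε > 0, ∀ᶠ s in nhdsWithin r (Icc δ R), F r ≤ F s + ε := by
      intro r hrI ε hε
      have hrpos : 0 < r := hδpos.trans_le hrI.1
      obtain ⟨t, htr, hmt⟩ := hmleft r (ε / (2 * Λ)) (by positivity)
      have part1 : ∀ᶠ s in nhds r, 1 / r - ε / 2 < 1 / s := by
        have hcont : Tendsto (fun s : ℝ => 1 / s) (nhds r) (nhds (1 / r)) := by
          simpa using (continuousAt_inv₀ hrpos.ne').tendsto.congr fun s => (one_div s).symm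
        exact hcont.eventually_const_lt (by linarith)
      have part2 : ∀ᶠ s in nhds r, t < s := eventually_gt_nhds htr
      have := (part1.and part2).filter_mono (nhdsWithin_le_nhds (s := Icc δ R))
      refine this.mono fun s hs => ?_
      obtain ⟨hs1, hs2⟩ := hs
      have hms : m t ≤ m s := hmmono (le_of_lt hs2)

      have : Λ * m r ≤ Λ * m s + ε / 2 := by
        have h1 : m r ≤ m s + ε / (2 * Λ) := by linarith
        have := mul_le_mul_of_nonneg_left h1 hΛ.le
        rw [mul_add] at this
        have h2 : Λ * (ε / (2 * Λ)) = ε / 2 := by field_simp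
        linarith
      rw [hF]
      dsimp only
      linarith
    obtain ⟨rs, hrsI, hrsmin⟩ := lsc_exists_min δ R hδR F
      (fun r hr => by
        have hrpos : 0 < r := hδpos.trans_le hr.1
        have h1 := hFpos r hrpos
        have h2 : (0:ℝ) ≤ 1 / r := by positivity
        exact h2.trans h1)
      hlsc
    have hrspos : 0 < rs := hδpos.trans_le hrsI.1
    refine ⟨vfun Ω rs, hvadm rs hrspos, fun v hv => ?_⟩
    have hJu : Jfun Ω Λ (vfun Ω rs) ≤ F rs := hJv rs hrspos
    have hJultc : Jfun Ω Λ (vfun Ω rs) < c :=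
      lt_of_le_of_lt (hJu.trans (hrsmin r₀ ⟨hδr₀.le, hr₀R⟩)) hFr₀
    set Lv := lipOn v (closure Ω) with hLv
    have hLv0 : 0 ≤ Lv := lipOn_nonneg hv.1
    rcases eq_or_lt_of_le hLv0 with hLv0' | hLvpos
    · rw [hJzero v hv hLv0'.symm]; exact hJultc.le
    · set ρ := 1 / Lv with hρ
      have hρpos : 0 < ρ := by positivity
      have hJvlow : F ρ ≤ Jfun Ω Λ v := hJlow v hv hLvpos
      rcases lt_or_ge ρ δ with hρδ | hρδ
      · -- ρ < δ means Lv > c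
        have hLvc : c < Lv := by
          rw [hρ, hδ] at hρδ
          rw [div_lt_div_iff₀ (by positivity) hcpos] at hρδ
          nlinarith
        have : Lv ≤ Jfun Ω Λ v := by
          rw [Jfun, ← hLv]
          have : 0 ≤ Λ * (volume {x ∈ Ω | 0 < v x}).toReal := by positivity
          linarith
        linarith
      · rcases le_or_gt ρ R with hρR | hρR
        · exact (hJu.trans (hrsmin ρ ⟨hρδ, hρR⟩)).trans hJvlow
        · have : F ρ = 1 / ρ + c := by simp only [hF, hc, hm]; rw [hAR ρ hρR]
          have h2 : 0 < 1 / ρ := by positivity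
          have : c ≤ F ρ := by rw [this]; linarith
          linarith
  · -- no model function beats the constant 1
    push_neg at hcase
    refine ⟨fun _ => (1:ℝ), hone, fun v hv => ?_⟩
    rw [honeJ]
    set Lv := lipOn v (closure Ω) with hLv
    have hLv0 : 0 ≤ Lv := lipOn_nonneg hv.1
    rcases eq_or_lt_of_le hLv0 with hLv0' | hLvpos
    · rw [hJzero v hv hLv0'.symm]
    · have h1 : F (1 / Lv) ≤ Jfun Ω Λ v := hJlow v hv hLvpos
      have h2 : c ≤ F (1 / Lv) := hcase (1 / Lv) (by positivity)
      linarith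
end
end

section
/- Uniqueness via the distance function: let Ω ⊂ ℝⁿ be open bounded convex, r ∈ (0, R_Ω] such that the distance function dist(·, ∂Ω) is differentiable everywhere in D_r := Ω \ closure(Ω_r) (equivalently r ≤ r_sing := dist(Σ, ∂Ω) where Σ is the cut locus). If v is a nonnegative 1/r-Lipschitz function on Ω̄ with v = 1 on ∂Ω and {v > 0} ∩ Ω = D_r, then v = v_r := [1 − dist(·, ∂Ω)/r]₊ on Ω̄. -/
open MeasureTheory Metric Set Filter

noncomputable section

section Stmt16AuxSection
namespace Stmt16Aux
open Topology

variable {E : Type*} [NormedAddCommGroup E] [InnerProductSpace ℝ E] [CompleteSpace E]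

local notation "⟪" x ", " y "⟫" => @inner ℝ _ _ x y

set_option linter.unusedSectionVars false
set_option linter.unusedVariables false

lemma fderiv_inner [CompleteSpace E] (f : E → ℝ) (p w : E) :
    ⟪gradient f p, w⟫ = fderiv ℝ f p w := InnerProductSpace.toDual_symm_apply

lemma hasDerivAt_line [CompleteSpace E] (f : E → ℝ) (p w : E) (s : ℝ)
    (hf : DifferentiableAt ℝ f (p + s • w)) :
    HasDerivAt (fun t : ℝ => f (p + t • w)) ⟪gradient f (p + s • w), w⟫ s := by
  have h1 : HasDerivAt (fun t : ℝ => p + t • w) w s := by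
    simpa using ((hasDerivAt_id s).smul_const w).const_add p
  have h2 := hf.hasFDerivAt.comp_hasDerivAt s h1
  rw [fderiv_inner]
  exact h2

lemma d_lip (F : Set E) (a b : E) : |infDist a F - infDist b F| ≤ dist a b := by
  rw [abs_sub_le_iff]
  constructor
  · have := infDist_le_infDist_add_dist (x := a) (y := b) (s := F)
    linarith
  · have := infDist_le_infDist_add_dist (x := b) (y := a) (s := F)
    rw [dist_comm] at this
    linarith

variable {Ω : Set E}

lemma frontier_ne [Nontrivial E] (hΩo : IsOpen Ω) (hΩb : Bornology.IsBounded Ω)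
    (hΩne : Ω.Nonempty) : (frontier Ω).Nonempty := by
  by_contra h
  rw [Set.not_nonempty_iff_eq_empty] at h
  rcases isClopen_iff.mp (isClopen_iff_frontier_eq_empty.mpr h) with h1 | h1
  · exact hΩne.ne_empty h1
  · exact NormedSpace.unbounded_univ ℝ E (h1 ▸ hΩb)

lemma dpos [Nontrivial E] (hΩo : IsOpen Ω) (hΩb : Bornology.IsBounded Ω)
    (hΩne : Ω.Nonempty) {q : E} (hq : q ∈ Ω) : 0 < infDist q (frontier Ω) := by
  refine (IsClosed.notMem_iff_infDist_pos isClosed_frontier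
    (frontier_ne hΩo hΩb hΩne)).mp ?_
  rw [hΩo.frontier_eq]
  exact fun h => h.2 hq

lemma mem_of_dpos (hΩo : IsOpen Ω) {q : E} (hq : q ∈ closure Ω)
    (hd : 0 < infDist q (frontier Ω)) : q ∈ Ω := by
  rcases (closure_eq_self_union_frontier Ω ▸ hq) with h | h
  · exact h
  · rw [infDist_zero_of_mem h] at hd
    exact absurd hd (lt_irrefl 0)

lemma interior_closure (hΩo : IsOpen Ω) (hΩc : Convex ℝ Ω) (hΩne : Ω.Nonempty) :
    interior (closure Ω) = Ω := by
  obtain ⟨x0, hx0⟩ := hΩne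
  refine subset_antisymm ?_ (interior_maximal subset_closure hΩo)
  intro z hz
  rcases eq_or_ne z x0 with rfl | hne
  · exact hx0
  obtain ⟨ε, hε, hball⟩ : ∃ ε > 0, ball z ε ⊆ closure Ω := by
    rcases Metric.mem_nhds_iff.mp (mem_interior_iff_mem_nhds.mp hz) with ⟨ε, hε, hb⟩
    exact ⟨ε, hε, hb⟩
  have hzx : (0:ℝ) < ‖z - x0‖ := by
    rw [norm_pos_iff, sub_ne_zero]; exact hne
  set c : ℝ := ε / (2 * ‖z - x0‖) with hc
  have hcpos : 0 < c := by positivity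
  set z' : E := z + c • (z - x0) with hz'
  have hz'mem : z' ∈ closure Ω := by
    apply hball
    rw [mem_ball, dist_eq_norm, hz', add_sub_cancel_left, norm_smul, Real.norm_eq_abs,
      abs_of_pos hcpos, hc, div_mul_eq_mul_div, div_lt_iff₀ (by positivity)]
    nlinarith
  have hseg : z ∈ openSegment ℝ x0 z' := by
    have h1c : (0:ℝ) < 1 + c := by positivity
    refine ⟨c / (1 + c), 1 / (1 + c), by positivity, by positivity, ?_, ?_⟩
    · field_simp; ring
    · rw [hz']
      match_scalars <;> field_simp <;> ring
  have := hΩc.openSegment_interior_closure_subset_interior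
    (by rw [hΩo.interior_eq]; exact hx0) hz'mem hseg
  rwa [hΩo.interior_eq] at this

lemma frontier_closure_eq (hΩo : IsOpen Ω) (hΩc : Convex ℝ Ω) (hΩne : Ω.Nonempty) :
    frontier (closure Ω) = frontier Ω := by
  rw [frontier, closure_closure, interior_closure hΩo hΩc hΩne, hΩo.frontier_eq]


-- L2: closed balls of radius d stay in the closure
lemma closedBall_subset (hΩo : IsOpen Ω) (hΩc : Convex ℝ Ω) (hΩne : Ω.Nonempty)
    (hint : interior (closure Ω) = Ω)
    {x : E} (hx : x ∈ closure Ω) :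
    closedBall x (infDist x (frontier Ω)) ⊆ closure Ω := by
  intro w hw
  by_contra hwn
  rw [mem_closedBall, dist_comm] at hw
  have hxw : x ≠ w := by rintro rfl; exact hwn hx
  have hdxw : 0 < dist x w := dist_pos.mpr hxw
  have hdx : 0 < infDist x (frontier Ω) := lt_of_lt_of_le hdxw hw
  set f : ℝ → E := fun t => x + t • (w - x) with hf
  have hfc : Continuous f := by
    apply continuous_const.add (continuous_id.smul continuous_const)
  set A : Set ℝ := {t | t ∈ Icc (0:ℝ) 1 ∧ f t ∈ closure Ω} with hA
  have hA0 : (0:ℝ) ∈ A := by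
    constructor
    · exact ⟨le_refl 0, zero_le_one⟩
    · simpa [hf] using hx
  have hAne : A.Nonempty := ⟨0, hA0⟩
  have hAbdd : BddAbove A := ⟨1, fun t ht => ht.1.2⟩
  set T : ℝ := sSup A with hT
  have hT0 : 0 ≤ T := le_csSup hAbdd hA0
  have hT1 : T ≤ 1 := csSup_le hAne (fun t ht => ht.1.2)
  have hγcl : f T ∈ closure Ω := by
    have h1 : T ∈ closure A := csSup_mem_closure hAne hAbdd
    have h2 : f T ∈ f '' closure A := ⟨T, h1, rfl⟩
    have h3 : f '' closure A ⊆ closure (f '' A) := image_closure_subset_closure_image hfc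
    have h4 : f '' A ⊆ closure Ω := by rintro _ ⟨t, ht, rfl⟩; exact ht.2
    have h5 : closure (f '' A) ⊆ closure Ω := closure_minimal h4 isClosed_closure
    exact h5 (h3 h2)
  have hTne1 : T ≠ 1 := by
    intro hTeq
    rw [hTeq] at hγcl
    have hfw : f 1 = w := by rw [hf]; simp
    rw [hfw] at hγcl
    exact hwn hγcl
  have hTlt1 : T < 1 := lt_of_le_of_ne hT1 hTne1
  -- points beyond T are outside closure Ω
  have hbeyond : ∀ t : ℝ, T < t → t ≤ 1 → f t ∉ closure Ω := by
    intro t hTt ht1 hmem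
    have htA : t ∈ A := ⟨⟨hT0.trans hTt.le, ht1⟩, hmem⟩
    exact absurd (le_csSup hAbdd htA) (not_le.mpr hTt)
  have hγfr : f T ∈ frontier (closure Ω) := by
    rw [frontier_eq_closure_inter_closure]
    refine ⟨by rw [closure_closure]; exact hγcl, ?_⟩
    · -- sequence from above
      have htend : Tendsto (fun k : ℕ => f (T + (1 - T) / (k + 2))) atTop (𝓝 (f T)) := by
        apply (hfc.tendsto T).comp
        have h0 : Tendsto (fun k : ℕ => (1 - T) / (k + 2)) atTop (𝓝 0) := by
          apply squeeze_zero (fun k => by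
            have h1T : (0:ℝ) ≤ 1 - T := by linarith
            positivity)
            (g := fun k : ℕ => (1 - T) * (1 / (k + 1)))
          · intro k
            rw [div_eq_mul_one_div]
            apply mul_le_mul_of_nonneg_left _ (by linarith)
            apply div_le_div_of_nonneg_left zero_le_one (by positivity) (by push_cast; linarith)
          · simpa using (tendsto_one_div_add_atTop_nhds_zero_nat).const_mul (1 - T)
        have := tendsto_const_nhds (x := T) (f := atTop (α := ℕ)) |>.add h0
        simpa using this
      refine mem_closure_of_tendsto htend ?_
      filter_upwards with k
      refine hbeyond _ ?_ ?_
      · have : (0:ℝ) < (1 - T) / (k + 2) := div_pos (by linarith) (by positivity)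
        linarith
      · have hk2 : (1:ℝ) ≤ (k:ℝ) + 2 := by push_cast; linarith [Nat.cast_nonneg (α := ℝ) k]
        have : (1 - T) / (k + 2) ≤ (1 - T) := by
          rw [div_le_iff₀ (by positivity)]
          nlinarith
        linarith
  have hγfr' : f T ∈ frontier Ω := by
    rwa [frontier, closure_closure, hint, ← hΩo.frontier_eq] at hγfr
  have hle : infDist x (frontier Ω) ≤ dist x (f T) := infDist_le_dist_of_mem hγfr'
  have : dist x (f T) = T * dist x w := by
    rw [hf, dist_eq_norm, dist_eq_norm]
    simp only [add_sub_cancel_left]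
    rw [show x - (x + T • (w - x)) = -(T • (w - x)) by abel, norm_neg, norm_smul,
      Real.norm_eq_abs, abs_of_nonneg hT0, show x - w = -(w-x) by abel, norm_neg]
  rw [this] at hle
  nlinarith [hw, hle, hdx, hTlt1, hdxw]

lemma le_infDist_of_ball_subset (hΩo : IsOpen Ω) (hΩc : Convex ℝ Ω) (hΩne : Ω.Nonempty)
    (hint : interior (closure Ω) = Ω) (hFne : (frontier Ω).Nonempty)
    {c : E} {ρ : ℝ} (hρ : 0 ≤ ρ) (hb : ball c ρ ⊆ closure Ω) :
    ρ ≤ infDist c (frontier Ω) := by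
  haveI : Nonempty ↥(frontier Ω) := hFne.to_subtype
  rw [infDist_eq_iInf]
  apply le_ciInf
  rintro ⟨ζ, hζ⟩
  by_contra hlt
  rw [not_le] at hlt
  have hζb : ζ ∈ ball c ρ := by rwa [mem_ball, dist_comm]
  have hζΩ : ζ ∈ Ω := by
    rw [← hint]
    exact interior_maximal hb isOpen_ball hζb
  rw [hΩo.frontier_eq] at hζ
  exact hζ.2 hζΩ

-- L3 concavity of the distance function
lemma concave (hΩo : IsOpen Ω) (hΩc : Convex ℝ Ω) (hΩne : Ω.Nonempty)
    (hint : interior (closure Ω) = Ω) (hFne : (frontier Ω).Nonempty) :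
    ∀ a ∈ closure Ω, ∀ b ∈ closure Ω, ∀ t s : ℝ, 0 ≤ t → 0 ≤ s → t + s = 1 →
      t * infDist a (frontier Ω) + s * infDist b (frontier Ω)
        ≤ infDist (t • a + s • b) (frontier Ω) := by
  intro a ha b hb t s ht hs hts
  set da := infDist a (frontier Ω) with hda
  set db := infDist b (frontier Ω) with hdb
  have hda0 : 0 ≤ da := infDist_nonneg
  have hdb0 : 0 ≤ db := infDist_nonneg
  set ρ : ℝ := t * da + s * db with hρdef
  have hρ0 : 0 ≤ ρ := by positivity
  rcases eq_or_lt_of_le hρ0 with heq | hlt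
  · rw [← heq]; exact infDist_nonneg
  apply le_infDist_of_ball_subset hΩo hΩc hΩne hint hFne hρ0
  intro ξ hξ
  rw [mem_ball, dist_comm, dist_eq_norm] at hξ
  set h : E := ξ - (t • a + s • b) with hh
  have hnh : ‖h‖ < ρ := by rw [hh, norm_sub_rev]; exact hξ
  have hξeq : ξ = t • (a + (da/ρ) • h) + s • (b + (db/ρ) • h) := by
    have hcoef : t * (da / ρ) + s * (db / ρ) = 1 := by
      field_simp
      linarith
    rw [hh]
    match_scalars <;> field_simp <;> ring
  have hmem1 : a + (da/ρ) • h ∈ closure Ω := by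
    apply closedBall_subset hΩo hΩc hΩne hint ha
    rw [mem_closedBall, dist_eq_norm, add_sub_cancel_left, norm_smul,
      Real.norm_eq_abs, abs_of_nonneg (by positivity)]
    calc da / ρ * ‖h‖ ≤ da / ρ * ρ := by
          apply mul_le_mul_of_nonneg_left hnh.le (by positivity)
      _ = da := by field_simp
  have hmem2 : b + (db/ρ) • h ∈ closure Ω := by
    apply closedBall_subset hΩo hΩc hΩne hint hb
    rw [mem_closedBall, dist_eq_norm, add_sub_cancel_left, norm_smul,
      Real.norm_eq_abs, abs_of_nonneg (by positivity)]
    calc db / ρ * ‖h‖ ≤ db / ρ * ρ := by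
          apply mul_le_mul_of_nonneg_left hnh.le (by positivity)
      _ = db := by field_simp
  rw [hξeq]
  exact hΩc.closure hmem1 hmem2 ht hs hts


/-- norm of the gradient of the distance function is 1 at interior differentiability points -/
lemma norm_gradient (hFc : IsClosed (frontier Ω)) (hFne : (frontier Ω).Nonempty)
    [ProperSpace E]
    {p : E} (hdp : 0 < infDist p (frontier Ω))
    (hd : DifferentiableAt ℝ (fun y => infDist y (frontier Ω)) p) :
    ‖gradient (fun y => infDist y (frontier Ω)) p‖ = 1 := by
  set f : E → ℝ := fun y => infDist y (frontier Ω) with hfdef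
  set dp : ℝ := infDist p (frontier Ω) with hdp'
  obtain ⟨y, hyF, hyd⟩ := hFc.exists_infDist_eq_dist hFne p
  set u : E := (dp)⁻¹ • (p - y) with hu
  have hpy : ‖p - y‖ = dp := by rw [← dist_eq_norm, ← hyd]
  have hunorm : ‖u‖ = 1 := by
    rw [hu, norm_smul, Real.norm_eq_abs, abs_of_pos (by positivity), hpy]
    field_simp
  -- exact values of f along the inward ray
  have hray : ∀ s : ℝ, 0 ≤ s → s ≤ dp → f (p + s • (-u)) = dp - s := by
    intro s hs0 hs1
    have hdp0 : dp ≠ 0 := ne_of_gt hdp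
    have hpt : p + s • (-u) = y + ((dp - s)/dp) • (p - y) := by
      rw [hu]
      match_scalars <;> field_simp <;> ring
    apply le_antisymm
    · calc f (p + s • (-u)) ≤ dist (p + s • (-u)) y := infDist_le_dist_of_mem hyF
        _ = dp - s := by
            rw [hpt, dist_eq_norm, add_sub_cancel_left, norm_smul, Real.norm_eq_abs,
              abs_of_nonneg (div_nonneg (by linarith) hdp.le), hpy]
            field_simp
    · have h1 : f p ≤ f (p + s • (-u)) + dist p (p + s • (-u)) :=
        infDist_le_infDist_add_dist
      have h2 : dist p (p + s • (-u)) = s := by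
        rw [dist_eq_norm, show p - (p + s • (-u)) = s • u by module, norm_smul,
          Real.norm_eq_abs, abs_of_nonneg hs0, hunorm, mul_one]
      rw [h2] at h1
      have : f p = dp := rfl
      linarith
  -- directional derivative along -u equals -1
  have hlim := hd.hasFDerivAt.lim (-u) (c := fun k : ℕ => (k:ℝ))
    (by simpa using tendsto_natCast_atTop_atTop (R := ℝ))
  have hev : ∀ᶠ k : ℕ in atTop,
      (k:ℝ) • (f (p + ((k:ℝ))⁻¹ • (-u)) - f p) = -1 := by
    obtain ⟨K, hK⟩ := exists_nat_gt (1/dp)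
    filter_upwards [eventually_ge_atTop (K+1)] with k hk
    have hkpos : (0:ℝ) < (k:ℝ) := by
      have : (K:ℝ) < (k:ℝ) := by exact_mod_cast Nat.lt_of_lt_of_le (Nat.lt_succ_self K) hk
      linarith [Nat.cast_nonneg (α := ℝ) K]
    have hkinv : ((k:ℝ))⁻¹ ≤ dp := by
      rw [inv_le_comm₀ hkpos hdp]
      calc dp⁻¹ = 1/dp := by rw [one_div]
        _ ≤ (K:ℝ) := hK.le
        _ ≤ (k:ℝ) := by exact_mod_cast le_trans (Nat.le_succ K) hk
    rw [hray _ (by positivity) hkinv]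
    have hfp : f p = dp := rfl
    rw [hfp, show dp - ((k:ℝ))⁻¹ - dp = -((k:ℝ))⁻¹ by ring, smul_eq_mul, mul_neg,
      mul_inv_cancel₀ (ne_of_gt hkpos)]
  have hderiv_neg_u : fderiv ℝ f p (-u) = -1 := by
    have h2 : Tendsto (fun _ : ℕ => (-1:ℝ)) atTop (𝓝 (fderiv ℝ f p (-u))) :=
      hlim.congr' (by filter_upwards [hev] with k hk; rw [hk])
    exact tendsto_nhds_unique h2 tendsto_const_nhds
  have hderiv_u : ⟪gradient f p, u⟫ = 1 := by
    rw [fderiv_inner]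
    have := (fderiv ℝ f p).map_neg u
    rw [hderiv_neg_u] at this
    linarith
  -- |fderiv| ≤ ‖w‖ by Lipschitz
  have hbound : ∀ w : E, fderiv ℝ f p w ≤ ‖w‖ := by
    intro w
    have hlim2 := hd.hasFDerivAt.lim w (c := fun k : ℕ => (k:ℝ))
      (by simpa using tendsto_natCast_atTop_atTop (R := ℝ))
    apply le_of_tendsto hlim2
    filter_upwards [eventually_ge_atTop 1] with k hk
    have hkpos : (0:ℝ) < (k:ℝ) := by exact_mod_cast hk
    have h3 : |f (p + ((k:ℝ))⁻¹ • w) - f p| ≤ dist (p + ((k:ℝ))⁻¹ • w) p := by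
      have := d_lip (frontier Ω) (p + ((k:ℝ))⁻¹ • w) p
      exact this
    have h4 : dist (p + ((k:ℝ))⁻¹ • w) p = ((k:ℝ))⁻¹ * ‖w‖ := by
      rw [dist_eq_norm, add_sub_cancel_left, norm_smul, Real.norm_eq_abs,
        abs_of_nonneg (by positivity)]
    calc (k:ℝ) • (f (p + ((k:ℝ))⁻¹ • w) - f p) ≤ (k:ℝ) * |f (p + ((k:ℝ))⁻¹ • w) - f p| := by
          rw [smul_eq_mul]
          exact mul_le_mul_of_nonneg_left (le_abs_self _) hkpos.le
      _ ≤ (k:ℝ) * (((k:ℝ))⁻¹ * ‖w‖) := by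
          apply mul_le_mul_of_nonneg_left _ hkpos.le
          rw [← h4]; exact h3
      _ = ‖w‖ := by field_simp
  have hGle : ‖gradient f p‖ ≤ 1 := by
    by_contra hgt
    rw [not_le] at hgt
    have h5 : ⟪gradient f p, gradient f p⟫ ≤ ‖gradient f p‖ := by
      rw [fderiv_inner]; exact hbound _
    rw [real_inner_self_eq_norm_mul_norm] at h5
    nlinarith
  have hGge : 1 ≤ ‖gradient f p‖ := by
    have := real_inner_le_norm (gradient f p) u
    rw [hderiv_u, hunorm, mul_one] at this
    exact this
  linarith


lemma hasDerivAt_line₀ (f : E → ℝ) (p w : E)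
    (hf : DifferentiableAt ℝ f p) :
    HasDerivAt (fun t : ℝ => f (p + t • w)) ⟪gradient f p, w⟫ 0 := by
  have h0 : p + (0:ℝ) • w = p := by simp
  have := hasDerivAt_line f p w 0 (by rw [h0]; exact hf)
  rwa [h0] at this

variable {Ω : Set E}

lemma supergradient
    (hconc : ∀ a ∈ closure Ω, ∀ b ∈ closure Ω, ∀ t s : ℝ, 0 ≤ t → 0 ≤ s → t + s = 1 →
      t * infDist a (frontier Ω) + s * infDist b (frontier Ω)
        ≤ infDist (t • a + s • b) (frontier Ω))
    {p : E} (hp : p ∈ closure Ω)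
    (hd : DifferentiableAt ℝ (fun y => infDist y (frontier Ω)) p)
    {ξ : E} (hξ : ξ ∈ closure Ω) :
    infDist ξ (frontier Ω) ≤ infDist p (frontier Ω)
      + ⟪gradient (fun y => infDist y (frontier Ω)) p, ξ - p⟫ := by
  set f : E → ℝ := fun y => infDist y (frontier Ω) with hfdef
  set φ : ℝ → ℝ := fun s => f (p + s • (ξ - p)) with hφdef
  have hder : HasDerivAt φ ⟪gradient f p, ξ - p⟫ 0 := hasDerivAt_line₀ f p (ξ - p) hd
  have hslope : ∀ s : ℝ, s ∈ Ioc (0:ℝ) 1 → f ξ - f p ≤ (φ s - φ 0) / s := by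
    intro s hs
    have hpe : p + s • (ξ - p) = (1 - s) • p + s • ξ := by module
    have h1 := hconc p hp ξ hξ (1 - s) s (by linarith [hs.2]) hs.1.le (by ring)
    have h2 : (1 - s) * f p + s * f ξ ≤ φ s := by
      rw [hφdef]; simp only; rw [hpe]; exact h1
    have hφ0 : φ 0 = f p := by rw [hφdef]; simp
    rw [hφ0, le_div_iff₀ hs.1]
    nlinarith
  have htend := hasDerivAt_iff_tendsto_slope.mp hder
  have htend2 : Tendsto (slope φ 0) (𝓝[>] 0) (𝓝 ⟪gradient f p, ξ - p⟫) :=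
    htend.mono_left (nhdsWithin_mono 0 (fun x hx => ne_of_gt hx))
  have hIoc : Ioc (0:ℝ) 1 ∈ 𝓝[>] (0:ℝ) :=
    Ioc_mem_nhdsGT_of_mem ⟨le_refl 0, zero_lt_one⟩
  have hfinal : f ξ - f p ≤ ⟪gradient f p, ξ - p⟫ := by
    apply ge_of_tendsto htend2
    filter_upwards [hIoc] with s hs
    rw [slope_def_field, sub_zero]
    exact hslope s hs
  linarith


lemma grad_cont [ProperSpace E] (hΩo : IsOpen Ω)
    (hFne : (frontier Ω).Nonempty)
    (hconc : ∀ a ∈ closure Ω, ∀ b ∈ closure Ω, ∀ t s : ℝ, 0 ≤ t → 0 ≤ s → t + s = 1 →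
      t * infDist a (frontier Ω) + s * infDist b (frontier Ω)
        ≤ infDist (t • a + s • b) (frontier Ω))
    {U : Set E} (hUo : IsOpen U) (hUΩ : U ⊆ Ω)
    (hUd : ∀ q ∈ U, DifferentiableAt ℝ (fun y => infDist y (frontier Ω)) q)
    (hUpos : ∀ q ∈ U, 0 < infDist q (frontier Ω))
    {p : E} (hp : p ∈ U) :
    ContinuousAt (fun q => gradient (fun y => infDist y (frontier Ω)) q) p := by
  set f : E → ℝ := fun y => infDist y (frontier Ω) with hfdef
  set G : E → E := fun q => gradient f q with hGdef
  by_contra hcont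
  rw [Metric.continuousAt_iff] at hcont
  push_neg at hcont
  obtain ⟨ε, hε, hctr⟩ := hcont
  obtain ⟨δ0, hδ0, hballU⟩ := Metric.isOpen_iff.mp hUo p hp
  have hexists : ∀ k : ℕ, ∃ q, dist q p < min δ0 (1/(k+1)) ∧ ε ≤ dist (G q) (G p) := by
    intro k
    obtain ⟨q, h1, h2⟩ := hctr (min δ0 (1/(k+1))) (lt_min hδ0 (by positivity))
    exact ⟨q, h1, h2⟩
  choose q hq1 hq2 using hexists
  have hqU : ∀ k, q k ∈ U := fun k =>
    hballU (mem_ball.mpr (lt_of_lt_of_le (hq1 k) (min_le_left _ _)))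
  have hqtend : Tendsto q atTop (𝓝 p) := by
    rw [tendsto_iff_dist_tendsto_zero]
    apply squeeze_zero (fun k => dist_nonneg)
      (fun k => ((hq1 k).le.trans (min_le_right _ _)))
    exact tendsto_one_div_add_atTop_nhds_zero_nat
  have hGmem : ∀ k, G (q k) ∈ closedBall (0:E) 1 := by
    intro k
    rw [mem_closedBall_zero_iff, hGdef]
    rw [norm_gradient isClosed_frontier hFne (hUpos _ (hqU k)) (hUd _ (hqU k))]
  obtain ⟨g, hgmem, φ, hφ, hgt⟩ := (isCompact_closedBall (0:E) 1).tendsto_subseq hGmem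
  have hqφtend : Tendsto (fun k => q (φ k)) atTop (𝓝 p) := hqtend.comp hφ.tendsto_atTop
  have hsuper_lim : ∀ ξ ∈ closure Ω, f ξ ≤ f p + ⟪g, ξ - p⟫ := by
    intro ξ hξ
    have hk : ∀ k, f ξ ≤ f (q (φ k)) + ⟪G (q (φ k)), ξ - q (φ k)⟫ := fun k =>
      supergradient hconc (subset_closure (hUΩ (hqU (φ k)))) (hUd _ (hqU (φ k))) hξ
    have ht1 : Tendsto (fun k => f (q (φ k)) + ⟪G (q (φ k)), ξ - q (φ k)⟫) atTop
        (𝓝 (f p + ⟪g, ξ - p⟫)) := by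
      apply Tendsto.add
      · exact ((continuous_infDist_pt (frontier Ω)).tendsto p).comp hqφtend
      · exact hgt.inner (tendsto_const_nhds.sub hqφtend)
    exact ge_of_tendsto ht1 (Eventually.of_forall hk)
  have hgeq : g = G p := by
    have hzero : ∀ w : E, ⟪G p - g, w⟫ = 0 := by
      intro w
      set ψ : ℝ → ℝ := fun s => f (p + s • w) - (f p + s * ⟪g, w⟫) with hψdef
      have hψ0 : ψ 0 = 0 := by rw [hψdef]; simp
      have hloc : IsLocalMax ψ 0 := by
        obtain ⟨ρ, hρ, hballp⟩ := Metric.isOpen_iff.mp hΩo p (hUΩ hp)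
        have hmem : Metric.ball (0:ℝ) (ρ/(‖w‖+1)) ∈ 𝓝 (0:ℝ) :=
          ball_mem_nhds _ (by positivity)
        filter_upwards [hmem] with s hs
        rw [hψ0, hψdef]
        simp only
        have hsw : p + s • w ∈ closure Ω := by
          apply subset_closure
          apply hballp
          rw [mem_ball, dist_eq_norm, add_sub_cancel_left, norm_smul]
          rw [mem_ball, dist_zero_right, Real.norm_eq_abs] at hs
          calc |s| * ‖w‖ ≤ |s| * (‖w‖ + 1) := by
                apply mul_le_mul_of_nonneg_left (by linarith) (abs_nonneg s)
            _ < (ρ/(‖w‖+1)) * (‖w‖+1) := by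
                apply mul_lt_mul_of_pos_right hs (by positivity)
            _ = ρ := by field_simp
        have := hsuper_lim (p + s • w) hsw
        rw [show p + s • w - p = s • w by abel, inner_smul_right] at this
        linarith
      have hder : HasDerivAt ψ (⟪G p, w⟫ - ⟪g, w⟫) 0 := by
        apply HasDerivAt.sub
        · exact hasDerivAt_line₀ f p w (hUd p hp)
        · have h1 : HasDerivAt (fun s : ℝ => s * ⟪g, w⟫) ⟪g, w⟫ 0 := by
            simpa using (hasDerivAt_id (0:ℝ)).mul_const ⟪g, w⟫
          exact h1.const_add (f p)
      have := hloc.hasDerivAt_eq_zero hder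
      rw [inner_sub_left]
      linarith [this]
    have h5 := hzero (G p - g)
    rw [inner_self_eq_zero, sub_eq_zero] at h5
    exact h5.symm
  have hdist_t : Tendsto (fun k => dist (G (q (φ k))) (G p)) atTop (𝓝 (dist g (G p))) :=
    hgt.dist tendsto_const_nhds
  have hεle : ε ≤ dist g (G p) :=
    ge_of_tendsto hdist_t (Eventually.of_forall (fun k => hq2 (φ k)))
  rw [hgeq, dist_self] at hεle
  linarith


set_option maxHeartbeats 1600000 in
lemma climb [ProperSpace E] (hΩo : IsOpen Ω) (hΩb : Bornology.IsBounded Ω)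
    (hFne : (frontier Ω).Nonempty)
    (hconc : ∀ a ∈ closure Ω, ∀ b ∈ closure Ω, ∀ t s : ℝ, 0 ≤ t → 0 ≤ s → t + s = 1 →
      t * infDist a (frontier Ω) + s * infDist b (frontier Ω)
        ≤ infDist (t • a + s • b) (frontier Ω))
    (hmem : ∀ q ∈ closure Ω, ∀ w : E, dist w q < infDist q (frontier Ω) → w ∈ Ω)
    (hdposΩ : ∀ q ∈ Ω, 0 < infDist q (frontier Ω))
    (r σ ε : ℝ) (hr0 : 0 < r) (hσ : 0 < σ) (hε0 : 0 < ε) (hε1 : ε < 1)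
    (hdiff : ∀ q ∈ Ω, infDist q (frontier Ω) < r →
      DifferentiableAt ℝ (fun y => infDist y (frontier Ω)) q)
    {x : E} (hx : x ∈ Ω) (hxd : infDist x (frontier Ω) < r - σ) :
    ∃ z ∈ Ω, r - σ ≤ infDist z (frontier Ω) ∧ infDist z (frontier Ω) ≤ r - σ/2 ∧
      (1 - ε) * dist x z ≤ infDist z (frontier Ω) - infDist x (frontier Ω) := by
  classical
  set f : E → ℝ := fun y => infDist y (frontier Ω) with hfdef
  set G : E → E := fun q => gradient f q with hGdef
  set dx : ℝ := f x with hdxdef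
  have hdx0 : 0 < dx := hdposΩ x hx
  have hσr : dx < r - σ := hxd
  -- the open set where things are differentiable
  set U : Set E := Ω ∩ f ⁻¹' (Iio r) with hUdef
  have hUo : IsOpen U := hΩo.inter ((continuous_infDist_pt (frontier Ω)).isOpen_preimage _ isOpen_Iio)
  have hUΩ : U ⊆ Ω := inter_subset_left
  have hUd : ∀ q ∈ U, DifferentiableAt ℝ f q := fun q hq => hdiff q hq.1 hq.2
  have hUpos : ∀ q ∈ U, 0 < f q := fun q hq => hdposΩ q hq.1
  -- compact set where we get uniform continuity of the gradient
  set K : Set E := closure Ω ∩ f ⁻¹' (Icc (dx/2) (r - σ/2)) with hKdef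
  have hKcpt : IsCompact K := by
    apply IsCompact.of_isClosed_subset hΩb.isCompact_closure
      (isClosed_closure.inter ((isClosed_Icc).preimage (continuous_infDist_pt (frontier Ω))))
      inter_subset_left
  have hKU : K ⊆ U := by
    rintro q ⟨hq1, hq2⟩
    have hq2' : dx/2 ≤ f q ∧ f q ≤ r - σ/2 := hq2
    have hqΩ : q ∈ Ω := by
      apply hmem q hq1 q
      rw [dist_self]
      exact lt_of_lt_of_le (by linarith) hq2'.1
    exact ⟨hqΩ, by simp only [mem_preimage, mem_Iio]; linarith⟩
  have hGcontK : ContinuousOn G K := fun q hq =>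
    (grad_cont hΩo hFne hconc hUo hUΩ hUd hUpos (hKU hq)).continuousWithinAt
  obtain ⟨δ, hδ0, hδ⟩ := Metric.uniformContinuousOn_iff.mp
    (hKcpt.uniformContinuousOn_of_continuous hGcontK) ε hε0
  set η : ℝ := min (δ/2) (min (dx/2) (σ/2)) with hηdef
  have hη0 : 0 < η := lt_min (by linarith) (lt_min (by linarith) (by linarith))
  have hηδ : η < δ := lt_of_le_of_lt (min_le_left _ _) (by linarith)
  have hηdx : η ≤ dx/2 := le_trans (min_le_right _ _) (min_le_left _ _)
  have hησ : η ≤ σ/2 := le_trans (min_le_right _ _) (min_le_right _ _)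
  set step : E → E := fun w => if f w < r - σ then w + η • G w else w with hstepdef
  set Q : ℕ → E := fun k => step^[k] x with hQdef
  have hQ0 : Q 0 = x := rfl
  have hQsucc : ∀ k, Q (k+1) = step (Q k) := by
    intro k
    rw [hQdef]
    exact Function.iterate_succ_apply' step k x
  have hinv : ∀ k : ℕ, Q k ∈ Ω ∧ dx ≤ f (Q k) ∧ f (Q k) ≤ r - σ + η ∧
      (1-ε) * dist x (Q k) ≤ f (Q k) - dx ∧
      min (r - σ) (dx + (k:ℝ) * (η * (1-ε))) ≤ f (Q k) := by
    intro k
    induction k with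
    | zero =>
      rw [hQ0]
      have hfx : f x = dx := rfl
      refine ⟨hx, by linarith, by linarith, ?_, ?_⟩
      · rw [dist_self, mul_zero, hfx, sub_self]
      · have h1 := min_le_right (r - σ) (dx + (0:ℝ) * (η * (1-ε)))
        push_cast
        linarith
    | succ k ih =>
      obtain ⟨hkΩ, hkge, hkle, hkdist, hkmin⟩ := ih
      by_cases hlt : f (Q k) < r - σ
      · -- move
        have hmove : Q (k+1) = Q k + η • G (Q k) := by rw [hQsucc k, hstepdef]; simp [hlt]
        have hdiffk : DifferentiableAt ℝ f (Q k) := hdiff _ hkΩ (by linarith)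
        have hGk : ‖G (Q k)‖ = 1 := norm_gradient isClosed_frontier hFne (hdposΩ _ hkΩ) hdiffk
        have hstepd : dist (Q (k+1)) (Q k) = η := by
          rw [hmove, dist_eq_norm, add_sub_cancel_left, norm_smul, Real.norm_eq_abs,
            abs_of_pos hη0, hGk, mul_one]
        have hQ'Ω : Q (k+1) ∈ Ω := by
          apply hmem (Q k) (subset_closure hkΩ) _
          rw [hstepd]
          linarith
        have hub : f (Q (k+1)) ≤ f (Q k) + η := by
          have := d_lip (frontier Ω) (Q (k+1)) (Q k)
          rw [hstepd] at this
          have := abs_le.mp this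
          linarith [this.2]
        -- points along the segment are fine
        have hseg : ∀ s : ℝ, 0 ≤ s → s ≤ η → (Q k + s • G (Q k)) ∈ Ω ∧
            f (Q k + s • G (Q k)) < r ∧ f (Q k + s • G (Q k)) ∈ Icc (dx/2) (r - σ/2) := by
          intro s hs0 hsη
          have hdists : dist (Q k + s • G (Q k)) (Q k) = s := by
            rw [dist_eq_norm, add_sub_cancel_left, norm_smul, Real.norm_eq_abs,
              abs_of_nonneg hs0, hGk, mul_one]
          have hsΩ : Q k + s • G (Q k) ∈ Ω := by
            apply hmem (Q k) (subset_closure hkΩ) _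
            rw [hdists]
            exact lt_of_le_of_lt hsη (by linarith)
          have hlip := abs_le.mp (d_lip (frontier Ω) (Q k + s • G (Q k)) (Q k))
          rw [hdists] at hlip
          refine ⟨hsΩ, by linarith [hlip.2], ⟨by linarith [hlip.1], by linarith [hlip.2]⟩⟩
        -- mean value theorem
        set g : E := G (Q k) with hgdef
        set φ : ℝ → ℝ := fun s => f (Q k + s • g) with hφdef
        have hφcont : ContinuousOn φ (Icc 0 η) := by
          apply Continuous.continuousOn
          exact (continuous_infDist_pt (frontier Ω)).comp
            (continuous_const.add (continuous_id.smul continuous_const))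
        have hφder : ∀ s ∈ Ioo (0:ℝ) η, HasDerivAt φ ⟪G (Q k + s • g), g⟫ s := by
          intro s hs
          apply hasDerivAt_line f (Q k) g s
          obtain ⟨h1, h2, _⟩ := hseg s hs.1.le hs.2.le
          exact hdiff _ h1 h2
        obtain ⟨c, hc, hceq⟩ := exists_hasDerivAt_eq_slope φ
          (fun s => ⟪G (Q k + s • g), g⟫) hη0 hφcont hφder
        have hKk : Q k ∈ K := by
          refine ⟨subset_closure hkΩ, ?_⟩
          simp only [mem_preimage, mem_Icc]
          constructor <;> linarith
        have hKc : Q k + c • g ∈ K := by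
          obtain ⟨h1, h2, h3⟩ := hseg c hc.1.le hc.2.le
          exact ⟨subset_closure h1, h3⟩
        have hdistc : dist (Q k + c • g) (Q k) = c := by
          rw [dist_eq_norm, add_sub_cancel_left, norm_smul, Real.norm_eq_abs,
            abs_of_nonneg hc.1.le, hGk, mul_one]
        have hGclose : dist (G (Q k + c • g)) (G (Q k)) < ε := by
          apply hδ _ hKc _ hKk
          rw [hdistc]
          linarith [hc.2]
        have hinner : 1 - ε ≤ ⟪G (Q k + c • g), g⟫ := by
          have h1 : ⟪G (Q k + c • g), g⟫ = ⟪g, g⟫ - ⟪g - G (Q k + c • g), g⟫ := by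
            rw [inner_sub_left]; ring
          have h2 : ⟪g - G (Q k + c • g), g⟫ ≤ ‖g - G (Q k + c • g)‖ * ‖g‖ :=
            real_inner_le_norm _ _
          have h3 : ‖g - G (Q k + c • g)‖ < ε := by
            rw [norm_sub_rev, ← dist_eq_norm]
            exact hGclose
          have h4 : ⟪g, g⟫ = 1 := by
            rw [real_inner_self_eq_norm_mul_norm, hgdef, hGk, mul_one]
          rw [h1, h4, hgdef]
          have h5 : ‖g‖ = 1 := hGk
          nlinarith [h2, h3, h5]
        have hgain : η * (1 - ε) ≤ f (Q (k+1)) - f (Q k) := by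
          have hφη : φ η = f (Q (k+1)) := by rw [hφdef, hmove]
          have hφ0 : φ 0 = f (Q k) := by rw [hφdef]; simp
          rw [hceq, hφη, hφ0, sub_zero] at hinner
          rw [le_div_iff₀ hη0] at hinner
          linarith [hinner]
        -- establish the invariant
        have hηε : 0 < η * (1 - ε) := mul_pos hη0 (by linarith)
        refine ⟨hQ'Ω, by linarith, by linarith, ?_, ?_⟩
        · have htri : dist x (Q (k+1)) ≤ dist x (Q k) + η := by
            calc dist x (Q (k+1)) ≤ dist x (Q k) + dist (Q k) (Q (k+1)) := dist_triangle _ _ _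
              _ = dist x (Q k) + η := by rw [dist_comm (Q k), hstepd]
          have h1 : (1-ε) * dist x (Q (k+1)) ≤ (1-ε) * (dist x (Q k) + η) :=
            mul_le_mul_of_nonneg_left htri (by linarith)
          have h2 : (1-ε) * (dist x (Q k) + η) = (1-ε) * dist x (Q k) + η * (1-ε) := by ring
          linarith
        · have hminle : min (r - σ) (dx + ((k:ℝ)+1) * (η * (1-ε)))
              ≤ min (r - σ) (dx + (k:ℝ) * (η * (1-ε))) + η * (1-ε) := by
            rcases le_total (r - σ) (dx + (k:ℝ) * (η * (1-ε))) with h | h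
            · rw [min_eq_left h]
              have h3 : min (r - σ) (dx + ((k:ℝ)+1) * (η * (1-ε))) ≤ r - σ := min_le_left _ _
              linarith
            · rw [min_eq_right h]
              have h3 : min (r - σ) (dx + ((k:ℝ)+1) * (η * (1-ε)))
                  ≤ dx + ((k:ℝ)+1) * (η * (1-ε)) := min_le_right _ _
              have h4 : dx + ((k:ℝ)+1) * (η * (1-ε))
                  = dx + (k:ℝ) * (η * (1-ε)) + η * (1-ε) := by ring
              linarith
          have hcast : (((k:ℕ)+1 : ℕ):ℝ) = (k:ℝ)+1 := by push_cast; ring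
          rw [hcast]
          calc min (r - σ) (dx + ((k:ℝ)+1) * (η * (1-ε)))
              ≤ min (r - σ) (dx + (k:ℝ) * (η * (1-ε))) + η * (1-ε) := hminle
            _ ≤ f (Q k) + η * (1-ε) := by linarith
            _ ≤ f (Q (k+1)) := by linarith
      · -- freeze
        have hfr : Q (k+1) = Q k := by rw [hQsucc k, hstepdef]; simp [hlt]
        rw [hfr]
        refine ⟨hkΩ, hkge, hkle, hkdist, ?_⟩
        have hcast : (((k:ℕ)+1 : ℕ):ℝ) = (k:ℝ)+1 := by push_cast; ring
        rw [hcast]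
        calc min (r - σ) (dx + ((k:ℝ)+1) * (η * (1-ε))) ≤ r - σ := min_le_left _ _
          _ ≤ f (Q k) := not_lt.mp hlt
  -- choose N large enough
  obtain ⟨N, hN⟩ := exists_nat_ge ((r - σ - dx) / (η * (1-ε)))
  obtain ⟨hNΩ, hNge, hNle, hNdist, hNmin⟩ := hinv N
  have hNbig : r - σ ≤ dx + (N:ℝ) * (η * (1-ε)) := by
    rw [div_le_iff₀ (mul_pos hη0 (by linarith : (0:ℝ) < 1 - ε))] at hN
    linarith
  refine ⟨Q N, hNΩ, ?_, by linarith, hNdist⟩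
  calc r - σ = min (r - σ) (dx + (N:ℝ) * (η * (1-ε))) := (min_eq_left hNbig).symm
    _ ≤ f (Q N) := hNmin

end Stmt16Aux
end Stmt16AuxSection

open Topology in
open Stmt16Aux in
theorem stmt_16 (n : ℕ) (hn : 2 ≤ n) (Ω : Set (EuclideanSpace ℝ (Fin n)))
    (hΩo : IsOpen Ω) (hΩb : Bornology.IsBounded Ω) (hΩc : Convex ℝ Ω)
    (hΩne : Ω.Nonempty) (r : ℝ) (hr : r ∈ Set.Ioc 0 (inradius Ω))
    (hdiff : ∀ x ∈ Ω \ closure (innerParallel Ω r),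
      DifferentiableAt ℝ (fun y => infDist y (frontier Ω)) x)
    (v : EuclideanSpace ℝ (Fin n) → ℝ)
    (hvpos : ∀ x ∈ closure Ω, 0 ≤ v x)
    (hvlip : ∀ x ∈ closure Ω, ∀ y ∈ closure Ω, |v x - v y| ≤ (1 / r) * dist x y)
    (hvbd : ∀ x ∈ frontier Ω, v x = 1)
    (hvset : {x ∈ Ω | 0 < v x} = Ω \ closure (innerParallel Ω r)) :
    ∀ x ∈ closure Ω, v x = vfun Ω r x := by
  classical
  obtain ⟨hr0, hrR⟩ := hr
  haveI : Nonempty (Fin n) := ⟨⟨0, by omega⟩⟩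
  set F : Set (EuclideanSpace ℝ (Fin n)) := frontier Ω with hFdef
  set f : EuclideanSpace ℝ (Fin n) → ℝ := fun y => infDist y F with hfdef
  have hFne : F.Nonempty := frontier_ne hΩo hΩb hΩne
  have hint : interior (closure Ω) = Ω := interior_closure hΩo hΩc hΩne
  have hconc := concave hΩo hΩc hΩne hint hFne
  have hdposΩ : ∀ q ∈ Ω, 0 < f q := fun q hq => dpos hΩo hΩb hΩne hq
  have hmem : ∀ q ∈ closure Ω, ∀ w : EuclideanSpace ℝ (Fin n), dist w q < f q → w ∈ Ω := by
    intro q hq w hw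
    have hwcl : w ∈ closure Ω :=
      closedBall_subset hΩo hΩc hΩne hint hq (mem_closedBall.mpr hw.le)
    apply mem_of_dpos hΩo hwcl
    have h1 : f q ≤ f w + dist q w := infDist_le_infDist_add_dist
    rw [dist_comm] at h1
    linarith
  have hipcl : closure (innerParallel Ω r) ⊆ {q : EuclideanSpace ℝ (Fin n) | r ≤ f q} := by
    apply closure_minimal
    · rintro q ⟨hq1, hq2⟩
      exact le_of_lt hq2
    · exact isClosed_le continuous_const (continuous_infDist_pt F)
  have hdiff' : ∀ q ∈ Ω, f q < r → DifferentiableAt ℝ f q := by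
    intro q hq hqr
    exact hdiff q ⟨hq, fun hmem' => absurd (hipcl hmem') (not_le.mpr hqr)⟩
  -- the max point
  obtain ⟨w, hwcl, hwmax'⟩ := hΩb.isCompact_closure.exists_isMaxOn hΩne.closure
    ((continuous_infDist_pt F).continuousOn)
  have hwub : ∀ q ∈ closure Ω, f q ≤ f w := fun q hq => hwmax' hq
  obtain ⟨x0, hx0⟩ := hΩne
  have hw0 : 0 < f w := lt_of_lt_of_le (hdposΩ x0 hx0) (hwub x0 (subset_closure hx0))
  have hwΩ : w ∈ Ω := mem_of_dpos hΩo hwcl hw0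
  have hbdd : BddAbove ((fun x : EuclideanSpace ℝ (Fin n) => infDist x (frontier Ω)) '' Ω) :=
    ⟨f w, by rintro _ ⟨q, hq, rfl⟩; exact hwub q (subset_closure hq)⟩
  have hwR : f w = inradius Ω := by
    apply le_antisymm
    · exact le_csSup hbdd ⟨w, hwΩ, rfl⟩
    · exact csSup_le (Set.Nonempty.image _ ⟨x0, hx0⟩) (by rintro _ ⟨q, hq, rfl⟩; exact hwub q (subset_closure hq))
  -- rule out r = inradius
  rcases eq_or_lt_of_le hrR with heq | hltR
  · exfalso
    have hip_empty : innerParallel Ω r = ∅ := by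
      ext q
      simp only [innerParallel, mem_setOf_eq, mem_empty_iff_false, iff_false, not_and, not_lt]
      intro hq
      calc infDist q (frontier Ω) = f q := rfl
        _ ≤ f w := hwub q (subset_closure hq)
        _ = inradius Ω := hwR
        _ = r := heq.symm
    have hdiffw : DifferentiableAt ℝ f w := by
      apply hdiff
      refine ⟨hwΩ, ?_⟩
      rw [hip_empty, closure_empty]
      exact notMem_empty w
    have hloc : IsLocalMax f w := by
      have hball : Metric.ball w (f w) ∈ 𝓝 w := ball_mem_nhds _ hw0
      filter_upwards [hball] with q hq
      exact hwub q (subset_closure (hmem w (subset_closure hwΩ) q (mem_ball.mp hq)))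
    have hfd : fderiv ℝ f w = 0 := hloc.fderiv_eq_zero
    have h2 : ‖gradient f w‖ = ‖fderiv ℝ f w‖ :=
      (InnerProductSpace.toDual ℝ (EuclideanSpace ℝ (Fin n))).symm.norm_map _
    have hnorm := norm_gradient isClosed_frontier hFne (hdposΩ w hwΩ) hdiffw
    rw [h2, hfd, norm_zero] at hnorm
    norm_num at hnorm
  -- main case: r < inradius
  have hwr : r < f w := by rw [hwR]; exact hltR
  -- v = 0 on points with f ≥ r
  have hveq0 : ∀ z ∈ Ω, r ≤ f z → v z = 0 := by
    intro z hzΩ hzr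
    have hzcl : z ∈ closure (innerParallel Ω r) := by
      have h0 : Tendsto (fun k : ℕ => (1/((k:ℝ)+1)) • (w - z)) atTop
          (𝓝 (0 : EuclideanSpace ℝ (Fin n))) := by
        simpa using (tendsto_one_div_add_atTop_nhds_zero_nat (𝕜 := ℝ)).smul_const (w - z)
      have htend : Tendsto (fun k : ℕ => z + (1/((k:ℝ)+1)) • (w - z)) atTop (𝓝 z) := by
        simpa using tendsto_const_nhds.add h0
      apply mem_closure_of_tendsto htend
      filter_upwards with k
      set t : ℝ := 1/((k:ℝ)+1) with ht
      have ht0 : 0 < t := by positivity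
      have ht1 : t ≤ 1 := by
        rw [ht, div_le_one (by positivity)]
        linarith [Nat.cast_nonneg (α := ℝ) k]
      have hpt : z + t • (w - z) = (1-t) • z + t • w := by module
      have hptΩ : z + t • (w - z) ∈ Ω := by
        rw [hpt]; exact hΩc hzΩ hwΩ (by linarith) ht0.le (by ring)
      refine ⟨hptΩ, ?_⟩
      have hcc := hconc z (subset_closure hzΩ) w (subset_closure hwΩ) (1-t) t
        (by linarith) ht0.le (by ring)
      rw [← hpt] at hcc
      have h5 : (1-t) * r ≤ (1-t) * f z := by
        apply mul_le_mul_of_nonneg_left hzr (by linarith)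
      calc r = (1-t) * r + t * r := by ring
        _ < (1-t) * r + t * f w := by nlinarith
        _ ≤ (1-t) * f z + t * f w := by linarith
        _ ≤ infDist (z + t • (w - z)) (frontier Ω) := hcc
    have hz2 : z ∉ {x ∈ Ω | 0 < v x} := by
      rw [hvset]
      exact fun hc => hc.2 hzcl
    simp only [mem_setOf_eq, not_and, not_lt] at hz2
    exact le_antisymm (hz2 hzΩ) (hvpos z (subset_closure hzΩ))
  -- lower bound everywhere
  have hlow : ∀ x ∈ closure Ω, 1 - f x / r ≤ v x := by
    intro x hx
    obtain ⟨y, hyF, hyd⟩ := isClosed_frontier.exists_infDist_eq_dist hFne x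
    have h1 := hvlip x hx y (frontier_subset_closure hyF)
    rw [hvbd y hyF, ← hyd] at h1
    have h2 := (abs_le.mp h1).1
    have h3 : (1/r) * f x = f x / r := by ring
    have hfx : infDist x F = f x := rfl
    rw [hfx] at h2
    linarith
  -- upper bound in the band
  have hup : ∀ x ∈ Ω, f x < r → v x ≤ 1 - f x / r := by
    intro x hxΩ hxr
    set dx : ℝ := f x with hdxdef
    have hdx0 : 0 < dx := hdposΩ x hxΩ
    have hσpos : ∀ k : ℕ, 0 < (r - dx)/((k:ℝ)+2) := fun k => div_pos (by linarith) (by positivity)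
    have hεpos : ∀ k : ℕ, (0:ℝ) < 1/((k:ℝ)+2) := fun k => by positivity
    have hεlt : ∀ k : ℕ, (1:ℝ)/((k:ℝ)+2) < 1 := by
      intro k
      rw [div_lt_one (by positivity)]
      linarith [Nat.cast_nonneg (α := ℝ) k]
    have hclimb : ∀ k : ℕ, ∃ z ∈ Ω, r - (r-dx)/((k:ℝ)+2) ≤ f z ∧
        f z ≤ r - ((r-dx)/((k:ℝ)+2))/2 ∧
        (1 - 1/((k:ℝ)+2)) * dist x z ≤ f z - dx := by
      intro k
      have hxd : dx < r - (r-dx)/((k:ℝ)+2) := by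
        have h1 : (r-dx)/((k:ℝ)+2) < (r-dx) := by
          rw [div_lt_iff₀ (by positivity)]
          nlinarith [Nat.cast_nonneg (α := ℝ) k]
        linarith
      exact climb hΩo hΩb hFne hconc hmem hdposΩ r _ _ hr0 (hσpos k) (hεpos k) (hεlt k)
        hdiff' hxΩ hxd
    choose z hz1 hz2 hz3 hz4 using hclimb
    obtain ⟨zs, hzscl, φ, hφ, hzt⟩ := hΩb.isCompact_closure.tendsto_subseq
      (fun k => subset_closure (hz1 k))
    have hσ0 : Tendsto (fun k : ℕ => (r - dx)/((k:ℝ)+2)) atTop (𝓝 0) := by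
      apply squeeze_zero (fun k => (hσpos k).le) (g := fun k : ℕ => (r - dx) * (1/((k:ℝ)+1)))
      · intro k
        rw [div_eq_mul_one_div]
        apply mul_le_mul_of_nonneg_left _ (by linarith)
        apply div_le_div_of_nonneg_left zero_le_one (by positivity) (by linarith [Nat.cast_nonneg (α := ℝ) k])
      · simpa using tendsto_one_div_add_atTop_nhds_zero_nat.const_mul (r - dx)
    have hε0' : Tendsto (fun k : ℕ => (1:ℝ)/((k:ℝ)+2)) atTop (𝓝 0) := by
      apply squeeze_zero (fun k => (hεpos k).le) (g := fun k : ℕ => (1:ℝ)/((k:ℝ)+1))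
      · intro k
        apply div_le_div_of_nonneg_left zero_le_one (by positivity) (by linarith [Nat.cast_nonneg (α := ℝ) k])
      · exact tendsto_one_div_add_atTop_nhds_zero_nat
    have hσφ : Tendsto (fun k : ℕ => (r - dx)/(((φ k):ℝ)+2)) atTop (𝓝 0) :=
      hσ0.comp hφ.tendsto_atTop
    have hεφ : Tendsto (fun k : ℕ => (1:ℝ)/(((φ k):ℝ)+2)) atTop (𝓝 0) :=
      hε0'.comp hφ.tendsto_atTop
    have hfz : Tendsto (fun k => f (z (φ k))) atTop (𝓝 (f zs)) :=
      ((continuous_infDist_pt F).tendsto zs).comp hzt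
    have hfzs : f zs = r := by
      apply le_antisymm
      · apply le_of_tendsto hfz
        filter_upwards with k
        have := hz3 (φ k)
        have := hσpos (φ k)
        linarith
      · have hlim2 : Tendsto (fun k : ℕ => r - (r - dx)/(((φ k):ℝ)+2)) atTop (𝓝 r) := by
          simpa using tendsto_const_nhds.sub hσφ
        exact le_of_tendsto_of_tendsto' hlim2 hfz (fun k => hz2 (φ k))
    have hzsΩ : zs ∈ Ω := mem_of_dpos hΩo hzscl (by rw [show infDist zs F = f zs from rfl, hfzs]; linarith)
    have hvzs : v zs = 0 := hveq0 zs hzsΩ (le_of_eq hfzs.symm)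
    -- v along the subsequence tends to 0
    have hvz : Tendsto (fun k => v (z (φ k))) atTop (𝓝 0) := by
      rw [show (0:ℝ) = v zs from hvzs.symm]
      rw [tendsto_iff_dist_tendsto_zero]
      apply squeeze_zero (fun k => dist_nonneg) (g := fun k => (1/r) * dist (z (φ k)) zs)
      · intro k
        rw [Real.dist_eq]
        exact hvlip (z (φ k)) (subset_closure (hz1 (φ k))) zs hzscl
      · have hd0 : Tendsto (fun k => dist (z (φ k)) zs) atTop (𝓝 0) :=
          tendsto_iff_dist_tendsto_zero.mp hzt
        simpa using hd0.const_mul (1/r)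
    -- the inequality chain
    have hvk : ∀ k : ℕ, v x ≤ v (z (φ k)) +
        (1/r) * ((f (z (φ k)) - dx) / (1 - 1/(((φ k):ℝ)+2))) := by
      intro k
      have hεk := hεlt (φ k)
      have h1ε : (0:ℝ) < 1 - 1/(((φ k):ℝ)+2) := by linarith
      have hdistle : dist x (z (φ k)) ≤ (f (z (φ k)) - dx) / (1 - 1/(((φ k):ℝ)+2)) := by
        rw [le_div_iff₀ h1ε]
        have := hz4 (φ k)
        linarith [this]
      have h2 := hvlip x (subset_closure hxΩ) (z (φ k)) (subset_closure (hz1 (φ k)))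
      have h3 := (abs_le.mp h2).1
      have h4 : (1/r) * dist x (z (φ k)) ≤
          (1/r) * ((f (z (φ k)) - dx) / (1 - 1/(((φ k):ℝ)+2))) :=
        mul_le_mul_of_nonneg_left hdistle (by positivity)
      have h5 := (abs_le.mp h2).2
      linarith
    have hlimit : Tendsto (fun k : ℕ => v (z (φ k)) +
        (1/r) * ((f (z (φ k)) - dx) / (1 - 1/(((φ k):ℝ)+2)))) atTop
        (𝓝 (0 + (1/r) * ((r - dx) / (1 - 0)))) := by
      apply hvz.add
      apply Tendsto.const_mul
      apply Tendsto.div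
      · rw [← hfzs]; exact hfz.sub tendsto_const_nhds
      · exact tendsto_const_nhds.sub hεφ
      · norm_num
    have hfinal := ge_of_tendsto' hlimit hvk
    have : (0:ℝ) + (1/r) * ((r - dx) / (1 - 0)) = 1 - dx / r := by
      field_simp
      ring
    linarith
  -- put it together
  intro x hx
  have hvfx : vfun Ω r x = max (1 - f x / r) 0 := rfl
  rcases (closure_eq_self_union_frontier Ω ▸ hx) with hxΩ | hxF
  · rcases lt_or_ge (f x) r with hxr | hxr
    · have h1 := hlow x hx
      have h2 := hup x hxΩ hxr
      have h3 : 0 ≤ 1 - f x / r := by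
        have : f x / r < 1 := (div_lt_one hr0).mpr hxr
        linarith
      rw [hvfx, max_eq_left h3]
      linarith
    · have h1 : v x = 0 := hveq0 x hxΩ hxr
      have h2 : 1 - f x / r ≤ 0 := by
        have : 1 ≤ f x / r := (one_le_div hr0).mpr hxr
        linarith
      rw [hvfx, max_eq_right h2, h1]
  · rw [hvbd x hxF, hvfx]
    rw [show f x = 0 from infDist_zero_of_mem hxF]
    norm_num
end
end

section
/- Gradient-constrained minimization: for Ω ⊂ ℝⁿ open bounded convex with inradius R_Ω, Λ > 0 and λ > 0, the minimum over 𝓛₁(Ω) of the functional J_Λ^λ(u) := λ + Λ|{u > 0}| if Lip(u) ≤ λ (and +∞ otherwise) equals λ + Λ|Ω| if λ < 1/R_Ω, and equals λ + Λ|Ω \ closure(Ω_{1/λ})| if λ ≥ 1/R_Ω; in the latter case v_{1/λ}(x) = [1 − λ·dist(x, ∂Ω)]₊ is a minimizer. -/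
open MeasureTheory Metric Set Filter

noncomputable section

namespace Stmt18Aux
variable {n : ℕ} {Ω : Set (EuclideanSpace ℝ (Fin n))}


variable {n : ℕ} {Ω : Set (EuclideanSpace ℝ (Fin n))}

lemma le_infDist' {x : EuclideanSpace ℝ (Fin n)} {s : Set (EuclideanSpace ℝ (Fin n))} {r : ℝ}
    (hs : s.Nonempty) (h : ∀ y ∈ s, r ≤ dist x y) : r ≤ infDist x s := by
  by_contra hlt
  push_neg at hlt
  obtain ⟨y, hy, hxy⟩ := (infDist_lt_iff hs).1 hlt
  exact absurd hxy (not_lt.2 (h y hy))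

lemma compl_nonempty (hn : 2 ≤ n) (hΩb : Bornology.IsBounded Ω) : Ωᶜ.Nonempty := by
  haveI : NeZero n := ⟨by omega⟩
  rcases eq_empty_or_nonempty Ωᶜ with h | h
  · rw [compl_empty_iff] at h
    subst h
    exact absurd hΩb (NormedSpace.unbounded_univ ℝ _)
  · exact h

lemma frontier_nonempty (hn : 2 ≤ n) (hΩb : Bornology.IsBounded Ω) (hΩne : Ω.Nonempty) :
    (frontier Ω).Nonempty := by
  haveI : NeZero n := ⟨by omega⟩
  refine nonempty_frontier_iff.mpr ⟨hΩne, ?_⟩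
  rintro rfl
  exact NormedSpace.unbounded_univ ℝ _ hΩb

lemma infDist_frontier_eq (hn : 2 ≤ n) (hΩo : IsOpen Ω) (hΩb : Bornology.IsBounded Ω)
    {x : EuclideanSpace ℝ (Fin n)} (hx : x ∈ Ω) :
    infDist x (frontier Ω) = infDist x Ωᶜ := by
  have hc : Ωᶜ.Nonempty := compl_nonempty hn hΩb
  have hfr : (frontier Ω).Nonempty := frontier_nonempty hn hΩb ⟨x, hx⟩
  refine le_antisymm ?_ ?_
  · obtain ⟨y, hy, hdy⟩ := hΩo.isClosed_compl.exists_infDist_eq_dist hc x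
    have hD : 0 < dist x y := dist_pos.2 fun h => hy (h ▸ hx)
    have hycl : y ∈ closure Ω := by
      rw [Metric.mem_closure_iff]
      intro ε hε
      set δ : ℝ := min (ε / (2 * dist x y)) (1 / 2) with hδdef
      have hδ0 : 0 < δ := lt_min (by positivity) (by norm_num)
      have hδ1 : δ < 1 := lt_of_le_of_lt (min_le_right _ _) (by norm_num)
      refine ⟨x + (1 - δ) • (y - x), ?_, ?_⟩
      · have hdist : dist x (x + (1 - δ) • (y - x)) < infDist x Ωᶜ := by
          have : x - (x + (1 - δ) • (y - x)) = -((1 - δ) • (y - x)) := by module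
          rw [dist_eq_norm, this, norm_neg, norm_smul, Real.norm_eq_abs,
            abs_of_nonneg (by linarith)]
          rw [hdy, ← dist_eq_norm' x y]  -- ‖y - x‖ = dist y x? dist_eq_norm' : dist x y = ‖y - x‖
          nlinarith [hD]
        have := notMem_of_dist_lt_infDist hdist
        simpa using this
      · have : x + (1 - δ) • (y - x) - y = -(δ • (y - x)) := by module
        rw [dist_comm, dist_eq_norm, this, norm_neg, norm_smul, Real.norm_eq_abs,
          abs_of_nonneg hδ0.le, ← dist_eq_norm' x y]
        calc δ * dist x y ≤ ε / (2 * dist x y) * dist x y :=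
              mul_le_mul_of_nonneg_right (min_le_left _ _) dist_nonneg
          _ = ε / 2 := by field_simp
          _ < ε := by linarith
    have hyfr : y ∈ frontier Ω := by
      rw [hΩo.frontier_eq]
      exact ⟨hycl, hy⟩
    calc infDist x (frontier Ω) ≤ dist x y := infDist_le_dist_of_mem hyfr
      _ = infDist x Ωᶜ := hdy.symm
  · refine infDist_le_infDist_of_subset ?_ hfr
    rw [hΩo.frontier_eq]
    exact fun z hz => hz.2

lemma ball_subset (hn : 2 ≤ n) (hΩo : IsOpen Ω) (hΩb : Bornology.IsBounded Ω)
    {x : EuclideanSpace ℝ (Fin n)} (hx : x ∈ Ω) :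
    ball x (infDist x (frontier Ω)) ⊆ Ω := by
  rw [infDist_frontier_eq hn hΩo hΩb hx]
  exact ball_infDist_compl_subset




lemma infDist_pos (hn : 2 ≤ n) (hΩo : IsOpen Ω) (hΩb : Bornology.IsBounded Ω)
    {x : EuclideanSpace ℝ (Fin n)} (hx : x ∈ Ω) : 0 < infDist x (frontier Ω) := by
  have hfr : (frontier Ω).Nonempty := frontier_nonempty hn hΩb ⟨x, hx⟩
  refine (isClosed_frontier.notMem_iff_infDist_pos hfr).1 ?_
  rw [hΩo.frontier_eq]
  exact fun h => h.2 hx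

lemma concavity (hn : 2 ≤ n) (hΩo : IsOpen Ω) (hΩb : Bornology.IsBounded Ω)
    (hΩc : Convex ℝ Ω) {x y : EuclideanSpace ℝ (Fin n)} (hx : x ∈ Ω) (hy : y ∈ Ω)
    {t : ℝ} (ht0 : 0 ≤ t) (ht1 : t ≤ 1) :
    (1 - t) * infDist x (frontier Ω) + t * infDist y (frontier Ω)
      ≤ infDist ((1 - t) • x + t • y) (frontier Ω) := by
  have hfr : (frontier Ω).Nonempty := frontier_nonempty hn hΩb ⟨x, hx⟩
  set dx := infDist x (frontier Ω) with hdx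
  set dy := infDist y (frontier Ω) with hdy
  have hdx0 : 0 < dx := infDist_pos hn hΩo hΩb hx
  have hdy0 : 0 < dy := infDist_pos hn hΩo hΩb hy
  set ρ := (1 - t) * dx + t * dy with hρ
  have hρ0 : 0 < ρ := by
    have a1 : min dx dy ≤ dx := min_le_left _ _
    have a2 : min dx dy ≤ dy := min_le_right _ _
    have h1 : min dx dy ≤ ρ := by nlinarith [mul_nonneg (by linarith : (0:ℝ) ≤ 1 - t) (by linarith : 0 ≤ dx - min dx dy), mul_nonneg ht0 (by linarith : 0 ≤ dy - min dx dy)]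
    exact lt_of_lt_of_le (lt_min hdx0 hdy0) h1
  apply le_infDist' hfr
  intro w hw
  by_contra hlt
  push_neg at hlt
  set e := w - ((1 - t) • x + t • y) with he
  have hne : ‖e‖ < ρ := by
    rw [dist_comm, dist_eq_norm] at hlt
    exact hlt
  have h1 : x + (dx / ρ) • e ∈ Ω := by
    apply ball_subset hn hΩo hΩb hx
    have hxe : x - (x + (dx / ρ) • e) = -((dx / ρ) • e) := by module
    rw [mem_ball, dist_comm, dist_eq_norm, hxe, norm_neg, norm_smul, Real.norm_eq_abs,
      abs_of_pos (by positivity)]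
    calc dx / ρ * ‖e‖ < dx / ρ * ρ := by
          exact mul_lt_mul_of_pos_left hne (by positivity)
      _ = dx := by field_simp
  have h2 : y + (dy / ρ) • e ∈ Ω := by
    apply ball_subset hn hΩo hΩb hy
    have hye : y - (y + (dy / ρ) • e) = -((dy / ρ) • e) := by module
    rw [mem_ball, dist_comm, dist_eq_norm, hye, norm_neg, norm_smul, Real.norm_eq_abs,
      abs_of_pos (by positivity)]
    calc dy / ρ * ‖e‖ < dy / ρ * ρ := by
          exact mul_lt_mul_of_pos_left hne (by positivity)
      _ = dy := by field_simp
  have hco : (1 - t) * (dx / ρ) + t * (dy / ρ) = 1 := by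
    field_simp
    exact hρ.symm
  have hw' : w = (1 - t) • (x + (dx / ρ) • e) + t • (y + (dy / ρ) • e) := by
    have : (1 - t) • (x + (dx / ρ) • e) + t • (y + (dy / ρ) • e)
        = ((1 - t) • x + t • y) + ((1 - t) * (dx / ρ) + t * (dy / ρ)) • e := by
      module
    rw [this, hco, one_smul, he]
    abel
  have hwΩ : w ∈ Ω := by
    rw [hw']
    exact hΩc h1 h2 (by linarith) ht0 (by ring)
  rw [hΩo.frontier_eq] at hw
  exact hw.2 hwΩ

lemma le_inradius (hn : 2 ≤ n) (hΩb : Bornology.IsBounded Ω)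
    {x : EuclideanSpace ℝ (Fin n)} (hx : x ∈ Ω) :
    infDist x (frontier Ω) ≤ inradius Ω := by
  obtain ⟨w, hw⟩ := frontier_nonempty hn hΩb ⟨x, hx⟩
  obtain ⟨r, hr⟩ := hΩb.subset_closedBall w
  apply le_csSup
  · refine ⟨r, ?_⟩
    rintro _ ⟨z, hz, rfl⟩
    exact (infDist_le_dist_of_mem hw).trans (by simpa [dist_comm] using hr hz)
  · exact mem_image_of_mem _ hx

lemma inradius_pos (hn : 2 ≤ n) (hΩo : IsOpen Ω) (hΩb : Bornology.IsBounded Ω)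
    (hΩne : Ω.Nonempty) : 0 < inradius Ω := by
  obtain ⟨x, hx⟩ := hΩne
  calc (0:ℝ) < infDist x (frontier Ω) := infDist_pos hn hΩo hΩb hx
    _ ≤ inradius Ω := le_inradius hn hΩb hx

variable {u : EuclideanSpace ℝ (Fin n) → ℝ}

lemma lipOn_spec (s : Set (EuclideanSpace ℝ (Fin n)))
    (hu : ∃ L : ℝ, ∀ x ∈ s, ∀ y ∈ s, |u x - u y| ≤ L * dist x y) :
    0 ≤ lipOn u s ∧ ∀ x ∈ s, ∀ y ∈ s, |u x - u y| ≤ lipOn u s * dist x y := by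
  set S := {L : ℝ | 0 ≤ L ∧ ∀ x ∈ s, ∀ y ∈ s, |u x - u y| ≤ L * dist x y} with hS
  obtain ⟨L, hL⟩ := hu
  have hmem : max L 0 ∈ S :=
    ⟨le_max_right _ _, fun x hx y hy => (hL x hx y hy).trans
      (mul_le_mul_of_nonneg_right (le_max_left _ _) dist_nonneg)⟩
  have hne : S.Nonempty := ⟨_, hmem⟩
  have hbdd : BddBelow S := ⟨0, fun M hM => hM.1⟩
  have hcl : IsClosed S := by
    have : S = {L : ℝ | 0 ≤ L} ∩
        ⋂ (x) (_ : x ∈ s) (y) (_ : y ∈ s), {L : ℝ | |u x - u y| ≤ L * dist x y} := by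
      ext L
      simp only [hS, mem_setOf_eq, mem_inter_iff, mem_iInter]
    rw [this]
    refine (isClosed_le continuous_const continuous_id).inter ?_
    refine isClosed_iInter fun x => isClosed_iInter fun _ =>
      isClosed_iInter fun y => isClosed_iInter fun _ => ?_
    exact isClosed_le continuous_const (continuous_id.mul continuous_const)
  have : lipOn u s ∈ S := hcl.csInf_mem hne hbdd
  exact ⟨this.1, this.2⟩

lemma lipOn_le (s : Set (EuclideanSpace ℝ (Fin n))) {L : ℝ} (h0 : 0 ≤ L)
    (h : ∀ x ∈ s, ∀ y ∈ s, |u x - u y| ≤ L * dist x y) : lipOn u s ≤ L :=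
  csInf_le ⟨0, fun M hM => hM.1⟩ ⟨h0, h⟩

variable {lam : ℝ}

lemma vfun_lip (hlam : 0 < lam) (x y : EuclideanSpace ℝ (Fin n)) :
    |vfun Ω (1 / lam) x - vfun Ω (1 / lam) y| ≤ lam * dist x y := by
  have h1 : |vfun Ω (1 / lam) x - vfun Ω (1 / lam) y|
      ≤ |(1 - infDist x (frontier Ω) / (1 / lam)) - (1 - infDist y (frontier Ω) / (1 / lam))| :=
    abs_max_sub_max_le_abs _ _ _
  have h2 : |(1 - infDist x (frontier Ω) / (1 / lam)) - (1 - infDist y (frontier Ω) / (1 / lam))|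
      = lam * |infDist y (frontier Ω) - infDist x (frontier Ω)| := by
    have e : (1 - infDist x (frontier Ω) / (1 / lam)) - (1 - infDist y (frontier Ω) / (1 / lam))
        = lam * (infDist y (frontier Ω) - infDist x (frontier Ω)) := by
      field_simp
      ring
    rw [e, abs_mul, abs_of_pos hlam]
  have h3 : |infDist y (frontier Ω) - infDist x (frontier Ω)| ≤ dist x y := by
    have := (lipschitz_infDist_pt (frontier Ω)).dist_le_mul y x
    rwa [Real.dist_eq, NNReal.coe_one, one_mul, dist_comm] at this
  calc |vfun Ω (1 / lam) x - vfun Ω (1 / lam) y|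
      ≤ lam * |infDist y (frontier Ω) - infDist x (frontier Ω)| := h2 ▸ h1
    _ ≤ lam * dist x y := mul_le_mul_of_nonneg_left h3 hlam.le

lemma vfun_admissible (hlam : 0 < lam) : vfun Ω (1 / lam) ∈ admissible Ω := by
  refine ⟨⟨lam, fun x _ y _ => vfun_lip hlam x y⟩, fun x _ => le_max_right _ _, fun x hx => ?_⟩
  have : infDist x (frontier Ω) = 0 := infDist_zero_of_mem hx
  simp [vfun, this]

lemma vfun_lipOn_le (hlam : 0 < lam) : lipOn (vfun Ω (1 / lam)) (closure Ω) ≤ lam :=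
  lipOn_le _ hlam.le fun x _ y _ => vfun_lip hlam x y

lemma vfun_pos_set (hlam : 0 < lam) :
    {x ∈ Ω | 0 < vfun Ω (1 / lam) x} = {x ∈ Ω | infDist x (frontier Ω) < 1 / lam} := by
  ext x
  simp only [mem_setOf_eq, and_congr_right_iff]
  intro _
  rw [vfun, lt_max_iff]
  constructor
  · rintro (h | h)
    · have := sub_pos.1 h
      rwa [div_lt_one (by positivity)] at this
    · exact absurd h (lt_irrefl 0)
  · intro h
    left
    rw [sub_pos, div_lt_one (by positivity)]
    exact h

lemma u_pos (hfr : (frontier Ω).Nonempty) (hu : u ∈ admissible Ω)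
    (hlip : lipOn u (closure Ω) ≤ lam) (hlam : 0 < lam)
    {x : EuclideanSpace ℝ (Fin n)} (hx : x ∈ Ω)
    (hd : infDist x (frontier Ω) < 1 / lam) : 0 < u x := by
  obtain ⟨w, hw, hxw⟩ := (infDist_lt_iff hfr).1 hd
  have h1 : u w = 1 := hu.2.2 w hw
  have hspec := lipOn_spec (closure Ω) hu.1
  have h2 : |u x - u w| ≤ lipOn u (closure Ω) * dist x w :=
    hspec.2 x (subset_closure hx) w (frontier_subset_closure hw)
  have h3 : lipOn u (closure Ω) * dist x w ≤ lam * dist x w :=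
    mul_le_mul_of_nonneg_right hlip dist_nonneg
  have h4 : lam * dist x w < lam * (1 / lam) := mul_lt_mul_of_pos_left hxw hlam
  have h5 : lam * (1 / lam) = 1 := by field_simp
  have h6 : u w - u x ≤ |u x - u w| := by
    rw [abs_sub_comm]
    exact le_abs_self _
  linarith




lemma vol_eq (hn : 2 ≤ n) (hΩo : IsOpen Ω) (hΩb : Bornology.IsBounded Ω)
    (hΩc : Convex ℝ Ω) (hΩne : Ω.Nonempty) {r : ℝ} (hr0 : 0 < r) :
    volume {x ∈ Ω | infDist x (frontier Ω) < r}
      = volume (Ω \ closure (innerParallel Ω r)) := by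
  have hfr : (frontier Ω).Nonempty := frontier_nonempty hn hΩb hΩne
  have hcl_sub : closure (innerParallel Ω r) ⊆ {x ∈ Ω | r ≤ infDist x (frontier Ω)} := by
    have h1 : closure (innerParallel Ω r) ⊆ closure Ω :=
      closure_mono fun x hx => hx.1
    have h2 : closure (innerParallel Ω r) ⊆ {x | r ≤ infDist x (frontier Ω)} :=
      closure_minimal (fun x hx => hx.2.le)
        (isClosed_le continuous_const (continuous_infDist_pt _))
    intro x hx
    have hxd : r ≤ infDist x (frontier Ω) := h2 hx
    have hxΩ : x ∈ Ω := by
      by_contra h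
      have hxf : x ∈ frontier Ω := hΩo.frontier_eq ▸ ⟨h1 hx, h⟩
      have := infDist_zero_of_mem hxf
      rw [this] at hxd
      linarith
    exact ⟨hxΩ, hxd⟩
  rcases eq_empty_or_nonempty (innerParallel Ω r) with hemp | hne
  · rw [hemp, closure_empty, diff_empty]
    have hd_le : ∀ x ∈ Ω, infDist x (frontier Ω) ≤ r := by
      intro x hx
      by_contra h
      push_neg at h
      have hmem : x ∈ innerParallel Ω r := ⟨hx, h⟩
      rw [hemp] at hmem
      exact hmem
    set S := {x ∈ Ω | r ≤ infDist x (frontier Ω)} with hSdef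
    have hSclosed : IsClosed S := by
      have hSeq : S = closure Ω ∩ {x | r ≤ infDist x (frontier Ω)} := by
        ext x
        constructor
        · exact fun hx => ⟨subset_closure hx.1, hx.2⟩
        · rintro ⟨hxc, hxd⟩
          refine ⟨?_, hxd⟩
          by_contra h
          have hxf : x ∈ frontier Ω := hΩo.frontier_eq ▸ ⟨hxc, h⟩
          have h0 := infDist_zero_of_mem hxf
          rw [mem_setOf_eq, h0] at hxd
          linarith
      rw [hSeq]
      exact isClosed_closure.inter (isClosed_le continuous_const (continuous_infDist_pt _))
    have hSconv : Convex ℝ S := by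
      intro x hx y hy a b ha hb hab
      have hxy : a • x + b • y ∈ Ω := hΩc hx.1 hy.1 ha hb hab
      refine ⟨hxy, ?_⟩
      have hcon := concavity hn hΩo hΩb hΩc hx.1 hy.1 (t := b) hb (by linarith)
      have ha' : 1 - b = a := by linarith
      rw [ha'] at hcon
      have h1 : a * r ≤ a * infDist x (frontier Ω) := mul_le_mul_of_nonneg_left hx.2 ha
      have h2 : b * r ≤ b * infDist y (frontier Ω) := mul_le_mul_of_nonneg_left hy.2 hb
      have hr' : r = a * r + b * r := by rw [← add_mul, hab, one_mul]
      linarith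
    have hSint : interior S = ∅ := by
      by_contra h
      obtain ⟨x, hx⟩ := nonempty_iff_ne_empty.2 h
      obtain ⟨ε, hε, hball⟩ := Metric.isOpen_iff.1 isOpen_interior x hx
      have hxS : x ∈ S := interior_subset hx
      set δ : ℝ := min (ε / 2) (r / 2) with hδdef
      have hδ0 : 0 < δ := lt_min (by linarith) (by linarith)
      have hδε : δ ≤ ε / 2 := min_le_left _ _
      have hδr : δ ≤ r / 2 := min_le_right _ _
      have hdx : infDist x (frontier Ω) < infDist x (frontier Ω) + δ / 2 := by linarith
      obtain ⟨w, hw, hxw⟩ := (infDist_lt_iff hfr).1 hdx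
      have hc0 : r ≤ dist x w := le_trans hxS.2 (infDist_le_dist_of_mem hw)
      have hc : 0 < dist x w := lt_of_lt_of_le hr0 hc0
      have hwx : ‖w - x‖ = dist x w := by rw [← dist_eq_norm' x w]
      set z := x + (δ / dist x w) • (w - x) with hzdef
      have hdxz : dist x z = δ := by
        have hxz : x - z = -((δ / dist x w) • (w - x)) := by rw [hzdef]; module
        rw [dist_eq_norm, hxz, norm_neg, norm_smul, Real.norm_eq_abs,
          abs_of_pos (by positivity), hwx]
        field_simp
      have hzS : z ∈ S := interior_subset (hball (by
        rw [mem_ball, dist_comm, hdxz]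
        linarith))
      have hdzw : dist z w = dist x w - δ := by
        have hzw : z - w = (δ / dist x w - 1) • (w - x) := by rw [hzdef]; module
        rw [dist_eq_norm, hzw, norm_smul, Real.norm_eq_abs, hwx,
          abs_of_nonpos (by
            have : δ / dist x w ≤ 1 := by
              rw [div_le_one hc]
              linarith
            linarith)]
        field_simp
        ring
      have hzd : infDist z (frontier Ω) ≤ dist x w - δ :=
        hdzw ▸ infDist_le_dist_of_mem hw
      have hdxr : infDist x (frontier Ω) ≤ r := hd_le x hxS.1
      have := hzS.2
      linarith
    have hSvol : volume S = 0 := by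
      have hfrS : frontier S = S := by
        rw [frontier, hSclosed.closure_eq, hSint, diff_empty]
      calc volume S = volume (frontier S) := by rw [hfrS]
        _ = 0 := hSconv.addHaar_frontier volume
    have hset : {x ∈ Ω | infDist x (frontier Ω) < r} = Ω \ S := by
      ext x
      simp only [hSdef, mem_setOf_eq, mem_diff, not_and, not_le]
      constructor
      · exact fun hx => ⟨hx.1, fun _ => hx.2⟩
      · exact fun hx => ⟨hx.1, hx.2 hx.1⟩
    rw [hset, measure_diff_null hSvol]
  · obtain ⟨x₀, hx₀⟩ := hne
    have hset : {x ∈ Ω | infDist x (frontier Ω) < r} = Ω \ closure (innerParallel Ω r) := by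
      ext x
      constructor
      · rintro ⟨hxΩ, hxd⟩
        refine ⟨hxΩ, fun hc => ?_⟩
        have := (hcl_sub hc).2
        linarith
      · rintro ⟨hxΩ, hxc⟩
        refine ⟨hxΩ, ?_⟩
        by_contra h
        push_neg at h
        apply hxc
        rw [Metric.mem_closure_iff]
        intro ε hε
        set t : ℝ := min (ε / (dist x x₀ + 1)) 1 with htdef
        have ht0 : 0 < t := lt_min (by positivity) one_pos
        have ht1 : t ≤ 1 := min_le_right _ _
        refine ⟨(1 - t) • x + t • x₀, ⟨hΩc hxΩ hx₀.1 (by linarith) ht0.le (by ring), ?_⟩, ?_⟩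
        · have hcon := concavity hn hΩo hΩb hΩc hxΩ hx₀.1 ht0.le ht1
          have h1 : (1 - t) * r ≤ (1 - t) * infDist x (frontier Ω) :=
            mul_le_mul_of_nonneg_left h (by linarith)
          have h2 : t * r < t * infDist x₀ (frontier Ω) := mul_lt_mul_of_pos_left hx₀.2 ht0
          have hr' : r = (1 - t) * r + t * r := by ring
          linarith
        · rw [dist_comm, dist_eq_norm]
          have hdiff : (1 - t) • x + t • x₀ - x = t • (x₀ - x) := by module
          rw [hdiff, norm_smul, Real.norm_eq_abs, abs_of_pos ht0]
          have hD : ‖x₀ - x‖ = dist x x₀ := by rw [← dist_eq_norm' x x₀]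
          calc t * ‖x₀ - x‖ ≤ ε / (dist x x₀ + 1) * ‖x₀ - x‖ :=
                mul_le_mul_of_nonneg_right (min_le_left _ _) (norm_nonneg _)
            _ < ε := by
                rw [hD]
                have hlt : ε / (dist x x₀ + 1) * dist x x₀
                    < ε / (dist x x₀ + 1) * (dist x x₀ + 1) :=
                  mul_lt_mul_of_pos_left (by linarith) (by positivity)
                rw [div_mul_cancel₀ ε (by positivity : dist x x₀ + 1 ≠ 0)] at hlt
                exact hlt
    rw [hset]

end Stmt18Aux

theorem stmt_18 (n : ℕ) (hn : 2 ≤ n) (Ω : Set (EuclideanSpace ℝ (Fin n)))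
    (hΩo : IsOpen Ω) (hΩb : Bornology.IsBounded Ω) (hΩc : Convex ℝ Ω)
    (hΩne : Ω.Nonempty) (Λ lam : ℝ) (hΛ : 0 < Λ) (hlam : 0 < lam) :
    (lam < 1 / inradius Ω →
      IsLeast {y : ℝ | ∃ u ∈ admissible Ω, lipOn u (closure Ω) ≤ lam ∧
          y = lam + Λ * (volume {x ∈ Ω | 0 < u x}).toReal}
        (lam + Λ * (volume Ω).toReal)) ∧
    (1 / inradius Ω ≤ lam →
      (vfun Ω (1 / lam) ∈ admissible Ω ∧
        lipOn (vfun Ω (1 / lam)) (closure Ω) ≤ lam ∧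
        lam + Λ * (volume {x ∈ Ω | 0 < vfun Ω (1 / lam) x}).toReal
          = lam + Λ * (volume (Ω \ closure (innerParallel Ω (1 / lam)))).toReal) ∧
      IsLeast {y : ℝ | ∃ u ∈ admissible Ω, lipOn u (closure Ω) ≤ lam ∧
          y = lam + Λ * (volume {x ∈ Ω | 0 < u x}).toReal}
        (lam + Λ * (volume (Ω \ closure (innerParallel Ω (1 / lam)))).toReal)) := by
  open Stmt18Aux in
  have hfr : (frontier Ω).Nonempty := frontier_nonempty hn hΩb hΩne
  have hR : 0 < inradius Ω := inradius_pos hn hΩo hΩb hΩne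
  have hvolΩ : volume Ω ≠ ⊤ := hΩb.measure_lt_top.ne
  constructor
  · intro hcase
    have hRlt : inradius Ω < 1 / lam := by
      rw [lt_div_iff₀ hR] at hcase
      rw [lt_div_iff₀ hlam]
      nlinarith
    have hall : ∀ x ∈ Ω, infDist x (frontier Ω) < 1 / lam :=
      fun x hx => lt_of_le_of_lt (le_inradius hn hΩb hx) hRlt
    have hset : {x ∈ Ω | 0 < vfun Ω (1 / lam) x} = Ω := by
      rw [vfun_pos_set hlam]
      ext x
      exact ⟨fun h => h.1, fun h => ⟨h, hall x h⟩⟩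
    constructor
    · exact ⟨vfun Ω (1 / lam), vfun_admissible hlam, vfun_lipOn_le hlam, by rw [hset]⟩
    · rintro y ⟨u, hu, hlip, rfl⟩
      have huset : {x ∈ Ω | 0 < u x} = Ω := by
        ext x
        exact ⟨fun h => h.1, fun h => ⟨h, u_pos hfr hu hlip hlam h (hall x h)⟩⟩
      rw [huset]
  · intro _
    have hB : volume {x ∈ Ω | 0 < vfun Ω (1 / lam) x}
        = volume (Ω \ closure (innerParallel Ω (1 / lam))) := by
      rw [vfun_pos_set hlam]
      exact vol_eq hn hΩo hΩb hΩc hΩne (by positivity)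
    refine ⟨⟨vfun_admissible hlam, vfun_lipOn_le hlam, by rw [hB]⟩,
      ⟨vfun Ω (1 / lam), vfun_admissible hlam, vfun_lipOn_le hlam, by rw [hB]⟩, ?_⟩
    rintro y ⟨u, hu, hlip, rfl⟩
    have hsub : {x ∈ Ω | infDist x (frontier Ω) < 1 / lam} ⊆ {x ∈ Ω | 0 < u x} :=
      fun x hx => ⟨hx.1, u_pos hfr hu hlip hlam hx.1 hx.2⟩
    have hle : volume (Ω \ closure (innerParallel Ω (1 / lam)))
        ≤ volume {x ∈ Ω | 0 < u x} := by
      rw [← vol_eq hn hΩo hΩb hΩc hΩne (by positivity)]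
      exact measure_mono hsub
    have hfin : volume {x ∈ Ω | 0 < u x} ≠ ⊤ :=
      ne_top_of_le_ne_top hvolΩ (measure_mono fun x hx => hx.1)
    have h1 := ENNReal.toReal_mono hfin hle
    have h2 := mul_le_mul_of_nonneg_left h1 hΛ.le
    linarith
end
end
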